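/- arXiv:1706.03184 — 4 statements merged into one kernel-verified Lean document; each statement's English description precedes it below -/
import Mathlib

section
/- Let T be a binary computation tree of the form node(Tl, Tr), and let n ≥ 1 be an integer. Then Φ(T, n) = 1 + max( Φ(Tl, n−1) + Φ(Tr, n), Φ(Tr, n−1) + Φ(Tl, n) ). -/
/-- A binary computation tree: a single node, or a root with two subtrees. -/
inductive BTree : Type
  | triv : BTree
  | node : BTree → BTree → BTree
  deriving DecidableEq

/-- A steal step on a multiset of binary computation trees: choose an arbitrary
tree `U` and a tree `node l r` from the multiset, and replace them by `l` and `r`. -/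
def StealStep (S S' : Multiset BTree) : Prop :=
  ∃ (U l r : BTree) (S₀ : Multiset BTree),
    S = U ::ₘ BTree.node l r ::ₘ S₀ ∧ S' = l ::ₘ r ::ₘ S₀

/-- `StealSeq n S` means there exists a sequence of `n` steal steps starting from `S`. -/
def StealSeq : ℕ → Multiset BTree → Prop
  | 0, _ => True
  | n + 1, S => ∃ S', StealStep S S' ∧ StealSeq n S'

/-- The maximum length of a sequence of steal steps starting from `S`. -/
noncomputable def steals (S : Multiset BTree) : ℕ :=
  sSup {n | StealSeq n S}

/-- The `n`-th potential of `T`: the maximum number of steals starting from a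
configuration with one processor owning `T` and `n` processors with trivial trees. -/
noncomputable def Phi (T : BTree) (n : ℕ) : ℕ :=
  steals (T ::ₘ Multiset.replicate n BTree.triv)

/-! ### Basic multiset helper -/

lemma erase_cons_mem {a b : BTree} {s : Multiset BTree} (h : a ∈ s) :
    (b ::ₘ s).erase a = b ::ₘ s.erase a := by
  by_cases hab : b = a
  · subst hab
    rw [Multiset.erase_cons_head]
    conv_lhs => rw [← Multiset.cons_erase h]
  · exact Multiset.erase_cons_tail s hab

/-! ### Size and boundedness -/

def bsize : BTree → ℕ
  | .triv => 1
  | .node l r => 1 + bsize l + bsize r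

def msize (S : Multiset BTree) : ℕ := (S.map bsize).sum

lemma bsize_pos (T : BTree) : 1 ≤ bsize T := by
  cases T <;> simp [bsize] <;> omega

lemma msize_cons (a : BTree) (S : Multiset BTree) : msize (a ::ₘ S) = bsize a + msize S := by
  simp [msize]

lemma stealStep_msize {S S'} (h : StealStep S S') : msize S' + 2 ≤ msize S := by
  obtain ⟨U, l, r, S₀, rfl, rfl⟩ := h
  have := bsize_pos U
  simp only [msize_cons, bsize]
  omega

lemma stealSeq_le_msize {n S} (h : StealSeq n S) : n ≤ msize S := by
  induction n generalizing S with
  | zero => omega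
  | succ n ih =>
    obtain ⟨S', hst, hs⟩ := h
    have h1 := stealStep_msize hst
    have h2 := ih hs
    omega

lemma stealsSet_nonempty (S : Multiset BTree) : {n | StealSeq n S}.Nonempty := ⟨0, trivial⟩

lemma stealsSet_bdd (S : Multiset BTree) : BddAbove {n | StealSeq n S} :=
  ⟨msize S, fun _ hn => stealSeq_le_msize hn⟩

lemma stealSeq_steals (S : Multiset BTree) : StealSeq (steals S) S :=
  Nat.sSup_mem (stealsSet_nonempty S) (stealsSet_bdd S)

lemma le_steals {n S} (h : StealSeq n S) : n ≤ steals S := le_csSup (stealsSet_bdd S) h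

lemma stealStep_steals {S Y} (h : StealStep S Y) : 1 + steals Y ≤ steals S := by
  have : StealSeq (steals Y + 1) S := ⟨Y, h, stealSeq_steals Y⟩
  have := le_steals this
  omega

/-! ### Sequences with explicit end state -/

def StealSeqTo : ℕ → Multiset BTree → Multiset BTree → Prop
  | 0, S, E => S = E
  | n + 1, S, E => ∃ S', StealStep S S' ∧ StealSeqTo n S' E

lemma stealSeq_iff_to (n : ℕ) (S : Multiset BTree) : StealSeq n S ↔ ∃ E, StealSeqTo n S E := by
  induction n generalizing S with
  | zero => exact ⟨fun _ => ⟨S, rfl⟩, fun _ => trivial⟩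
  | succ n ih =>
    constructor
    · rintro ⟨S', hst, hs⟩
      obtain ⟨E, hE⟩ := (ih S').1 hs
      exact ⟨E, S', hst, hE⟩
    · rintro ⟨E, S', hst, hE⟩
      exact ⟨S', hst, (ih S').2 ⟨E, hE⟩⟩

lemma stealSeqTo_append {n k S E} (h : StealSeqTo n S E) (h2 : StealSeq k E) :
    StealSeq (n + k) S := by
  induction n generalizing S with
  | zero => cases h; simpa [Nat.zero_add] using h2
  | succ n ih =>
    obtain ⟨S', hst, hE⟩ := h
    exact (by rw [Nat.succ_add]; exact ⟨S', hst, ih hE⟩)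

lemma stealStep_add {S S'} (X : Multiset BTree) (h : StealStep S S') :
    StealStep (S + X) (S' + X) := by
  obtain ⟨U, l, r, S₀, rfl, rfl⟩ := h
  exact ⟨U, l, r, S₀ + X, by simp [Multiset.cons_add], by simp [Multiset.cons_add]⟩

lemma stealSeqTo_add {n S E} (X : Multiset BTree) (h : StealSeqTo n S E) :
    StealSeqTo n (S + X) (E + X) := by
  induction n generalizing S with
  | zero => cases h; rfl
  | succ n ih =>
    obtain ⟨S', hst, hE⟩ := h
    exact ⟨S' + X, stealStep_add X hst, ih hE⟩

lemma stealStep_card {S S'} (h : StealStep S S') : Multiset.card S' = Multiset.card S := by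
  obtain ⟨U, l, r, S₀, rfl, rfl⟩ := h
  simp

lemma stealSeqTo_card {n S E} (h : StealSeqTo n S E) : Multiset.card E = Multiset.card S := by
  induction n generalizing S with
  | zero => cases h; rfl
  | succ n ih =>
    obtain ⟨S', hst, hE⟩ := h
    rw [ih hE, stealStep_card hst]

lemma exists_step {S : Multiset BTree} (h2 : 2 ≤ Multiset.card S) {l r : BTree}
    (hn : BTree.node l r ∈ S) : ∃ S', StealStep S S' := by
  obtain ⟨t, ht⟩ := Multiset.exists_cons_of_mem hn
  have hct : Multiset.card t ≠ 0 := by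
    have := congrArg Multiset.card ht
    simp at this
    omega
  obtain ⟨U, hU⟩ := Multiset.exists_mem_of_ne_zero (by simpa using hct)
  obtain ⟨t', ht'⟩ := Multiset.exists_cons_of_mem hU
  refine ⟨l ::ₘ r ::ₘ t', U, l, r, t', ?_, rfl⟩
  rw [ht, ht', Multiset.cons_swap]

lemma steals_fullrun {S : Multiset BTree} (h2 : 2 ≤ Multiset.card S) :
    StealSeqTo (steals S) S (Multiset.replicate (Multiset.card S) BTree.triv) := by
  obtain ⟨E, hE⟩ := (stealSeq_iff_to _ _).1 (stealSeq_steals S)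
  have hcard : Multiset.card E = Multiset.card S := stealSeqTo_card hE
  have hstuck : ∀ x ∈ E, x = BTree.triv := by
    intro x hx
    cases x with
    | triv => rfl
    | node l r =>
      exfalso
      obtain ⟨E', hE'⟩ := exists_step (by omega) hx
      have : StealSeq (steals S + 1) S := stealSeqTo_append hE ⟨E', hE', trivial⟩
      have := le_steals this
      omega
  have hrep : E = Multiset.replicate (Multiset.card E) BTree.triv :=
    Multiset.eq_replicate_card.2 hstuck
  rw [hcard] at hrep
  rwa [← hrep]

/-! ### Replacing a trivial tree by any tree does not decrease steals -/

lemma stealSeq_triv_mono {n : ℕ} (T : BTree) : ∀ {X : Multiset BTree},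
    StealSeq n (BTree.triv ::ₘ X) → StealSeq n (T ::ₘ X) := by
  induction n with
  | zero => intro X _; trivial
  | succ n ih =>
    rintro X ⟨S', ⟨U, l, r, S₀, heq, rfl⟩, hs⟩
    by_cases hU : U = BTree.triv
    · subst hU
      have hX : X = BTree.node l r ::ₘ S₀ := by
        rwa [Multiset.cons_inj_right] at heq
      refine ⟨l ::ₘ r ::ₘ S₀, ⟨T, l, r, S₀, by rw [hX], rfl⟩, hs⟩
    · -- triv occurs in S₀
      have htm : BTree.triv ∈ S₀ := by
        have : BTree.triv ∈ U ::ₘ BTree.node l r ::ₘ S₀ := by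
          rw [← heq]; exact Multiset.mem_cons_self _ _
        rcases Multiset.mem_cons.1 this with h | h
        · exact absurd h.symm hU
        rcases Multiset.mem_cons.1 h with h | h
        · exact absurd h (by simp)
        · exact h
      set S₀' := S₀.erase BTree.triv with hS₀'
      have hS₀ : S₀ = BTree.triv ::ₘ S₀' := (Multiset.cons_erase htm).symm
      have hX : X = U ::ₘ BTree.node l r ::ₘ S₀' := by
        have h2 : BTree.triv ::ₘ X = BTree.triv ::ₘ (U ::ₘ BTree.node l r ::ₘ S₀') := by
          rw [heq, hS₀]
          simp only [← Multiset.singleton_add, ← add_assoc]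
          ac_rfl
        rwa [Multiset.cons_inj_right] at h2
      have hs' : StealSeq n (T ::ₘ (l ::ₘ r ::ₘ S₀')) := by
        apply ih
        have h3 : l ::ₘ r ::ₘ S₀ = BTree.triv ::ₘ (l ::ₘ r ::ₘ S₀') := by
          rw [hS₀]
          simp only [← Multiset.singleton_add, ← add_assoc]
          ac_rfl
        rwa [h3] at hs
      refine ⟨T ::ₘ (l ::ₘ r ::ₘ S₀'), ⟨U, l, r, T ::ₘ S₀', ?_, ?_⟩, hs'⟩
      · rw [hX]
        simp only [← Multiset.singleton_add, ← add_assoc]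
        ac_rfl
      · simp only [← Multiset.singleton_add, ← add_assoc]
        ac_rfl

lemma steals_triv_mono (T : BTree) (X : Multiset BTree) :
    steals (BTree.triv ::ₘ X) ≤ steals (T ::ₘ X) :=
  le_steals (stealSeq_triv_mono T (stealSeq_steals _))

/-! ### The potential function, defined recursively -/

def phi : BTree → ℕ → ℕ
  | .triv, _ => 0
  | .node _ _, 0 => 0
  | .node l r, n + 1 => 1 + max (phi l n + phi r (n + 1)) (phi r n + phi l (n + 1))

def inode : BTree → ℕ
  | .triv => 0
  | .node l r => 1 + inode l + inode r

lemma phi_mono (T : BTree) : ∀ n, phi T n ≤ phi T (n + 1) := by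
  induction T with
  | triv => intro n; simp [phi]
  | node l r ihl ihr =>
    intro n
    cases n with
    | zero => simp [phi]
    | succ n =>
      simp only [phi]
      have h1 := ihl n; have h2 := ihr n
      have h3 := ihl (n+1); have h4 := ihr (n+1)
      omega

lemma phi_mono_le (T : BTree) {m n : ℕ} (h : m ≤ n) : phi T m ≤ phi T n := by
  induction n with
  | zero => simpa [Nat.le_zero.1 h]
  | succ n ih =>
    rcases Nat.lt_or_ge m (n+1) with h' | h'
    · exact le_trans (ih (by omega)) (phi_mono T n)
    · have : m = n + 1 := by omega
      simp [this]

lemma phi_le_inode (T : BTree) : ∀ n, phi T n ≤ inode T := by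
  induction T with
  | triv => intro n; simp [phi, inode]
  | node l r ihl ihr =>
    intro n
    cases n with
    | zero => simp [phi]
    | succ n =>
      simp only [phi, inode]
      have h1 := ihl n; have h2 := ihr (n+1)
      have h3 := ihr n; have h4 := ihl (n+1)
      omega

/-- Steals obtained by processing trees in the order of the list. -/
def G : List BTree → ℕ → ℕ
  | [], _ => 0
  | T :: L, m => phi T m + G L (m + 1)

lemma G_mono (L : List BTree) : ∀ m, G L m ≤ G L (m + 1) := by
  induction L with
  | nil => intro m; simp [G]
  | cons T L ih =>
    intro m
    simp only [G]
    exact Nat.add_le_add (phi_mono T m) (ih (m+1))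

def minode (S : Multiset BTree) : ℕ := (S.map inode).sum

lemma minode_cons (a : BTree) (S : Multiset BTree) : minode (a ::ₘ S) = inode a + minode S := by
  simp [minode]

lemma G_le (p : List BTree) : ∀ m, G p m ≤ minode ↑p := by
  induction p with
  | nil => intro m; simp [G, minode]
  | cons T q ih =>
    intro m
    simp only [G]
    have h1 := phi_le_inode T m
    have h2 := ih (m+1)
    have : minode ↑(T :: q) = inode T + minode ↑q := by
      simp [minode]
    omega

/-- Max over all processing orders. -/
noncomputable def F (S : Multiset BTree) (m : ℕ) : ℕ :=
  sSup {k | ∃ p : List BTree, (↑p : Multiset BTree) = S ∧ G p m = k}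

lemma Fset_nonempty (S : Multiset BTree) (m : ℕ) :
    {k | ∃ p : List BTree, (↑p : Multiset BTree) = S ∧ G p m = k}.Nonempty :=
  ⟨G S.toList m, S.toList, S.coe_toList, rfl⟩

lemma Fset_bdd (S : Multiset BTree) (m : ℕ) :
    BddAbove {k | ∃ p : List BTree, (↑p : Multiset BTree) = S ∧ G p m = k} := by
  refine ⟨minode S, ?_⟩
  rintro k ⟨p, hp, rfl⟩
  rw [← hp]
  exact G_le p m

lemma G_le_F {p : List BTree} {S : Multiset BTree} (hp : (↑p : Multiset BTree) = S) (m : ℕ) :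
    G p m ≤ F S m :=
  le_csSup (Fset_bdd S m) ⟨p, hp, rfl⟩

lemma F_le {S : Multiset BTree} {m k : ℕ}
    (h : ∀ p : List BTree, (↑p : Multiset BTree) = S → G p m ≤ k) : F S m ≤ k :=
  csSup_le (Fset_nonempty S m) (by rintro x ⟨p, hp, rfl⟩; exact h p hp)

lemma F_spec (S : Multiset BTree) (m : ℕ) :
    ∃ p : List BTree, (↑p : Multiset BTree) = S ∧ G p m = F S m :=
  Nat.sSup_mem (Fset_nonempty S m) (Fset_bdd S m)

/-- F2: choosing any element first is a lower bound. -/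
lemma F_choice {a : BTree} {S : Multiset BTree} (ha : a ∈ S) (m : ℕ) :
    phi a m + F (S.erase a) (m + 1) ≤ F S m := by
  obtain ⟨q, hq, hGq⟩ := F_spec (S.erase a) (m + 1)
  have hp : (↑(a :: q) : Multiset BTree) = S := by
    rw [← Multiset.cons_coe, hq, Multiset.cons_erase ha]
  have := G_le_F hp m
  simp only [G] at this
  omega

/-- F3: the max is attained by choosing some element first. -/
lemma F_attain {S : Multiset BTree} (hS : S ≠ 0) (m : ℕ) :
    ∃ a ∈ S, F S m ≤ phi a m + F (S.erase a) (m + 1) := by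
  obtain ⟨p, hp, hG⟩ := F_spec S m
  cases p with
  | nil => exact absurd (by simpa using hp.symm) hS
  | cons a q =>
    have ha : a ∈ S := by
      rw [← hp]; simp
    refine ⟨a, ha, ?_⟩
    have hq : (↑q : Multiset BTree) = S.erase a := by
      have : (↑(a :: q) : Multiset BTree) = a ::ₘ ↑q := by simp
      rw [this] at hp
      rw [← hp, Multiset.erase_cons_head]
    have := G_le_F hq (m + 1)
    simp only [G] at hG
    omega

lemma F_mono_m (S : Multiset BTree) (m : ℕ) : F S m ≤ F S (m + 1) :=
  F_le (fun p hp => le_trans (G_mono p m) (G_le_F hp (m+1)))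

lemma F_triv (S : Multiset BTree) : ∀ m, F (BTree.triv ::ₘ S) m = F S (m + 1) := by
  induction S using Multiset.strongInductionOn with
  | ih S ih =>
    intro m
    apply le_antisymm
    · obtain ⟨a, ha, hle⟩ := F_attain (S := BTree.triv ::ₘ S) (by simp) m
      rcases Multiset.mem_cons.1 ha with rfl | haS
      · rw [Multiset.erase_cons_head] at hle
        simpa [phi] using hle
      · rw [erase_cons_mem haS] at hle
        have h1 : F (BTree.triv ::ₘ S.erase a) (m + 1) = F (S.erase a) (m + 2) :=
          ih _ (Multiset.erase_lt.2 haS) (m + 1)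
        have h2 : phi a (m + 1) + F (S.erase a) (m + 2) ≤ F S (m + 1) := F_choice haS (m + 1)
        have h3 : phi a m ≤ phi a (m + 1) := phi_mono a m
        omega
    · have := F_choice (a := BTree.triv) (S := BTree.triv ::ₘ S) (Multiset.mem_cons_self _ _) m
      rw [Multiset.erase_cons_head] at this
      simpa [phi] using this

/-- Key combinatorial lemma: splitting a root is worth one steal plus an idle processor. -/
lemma F_key (l r : BTree) (S : Multiset BTree) :
    ∀ m, 1 + F (l ::ₘ r ::ₘ S) m ≤ F (BTree.node l r ::ₘ S) (m + 1) := by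
  induction S using Multiset.strongInductionOn with
  | ih S ih =>
    intro m
    obtain ⟨a, ha, hle⟩ := F_attain (S := l ::ₘ r ::ₘ S) (by simp) m
    have hnode : phi (BTree.node l r) (m + 1) =
        1 + max (phi l m + phi r (m + 1)) (phi r m + phi l (m + 1)) := rfl
    rcases Multiset.mem_cons.1 ha with rfl | ha'
    · -- a = l
      rw [Multiset.erase_cons_head] at hle
      obtain ⟨b, hb, hbe⟩ := F_attain (S := r ::ₘ S) (by simp) (m + 1)
      rcases Multiset.mem_cons.1 hb with rfl | hbS
      · -- b = r
        rw [Multiset.erase_cons_head] at hbe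
        rw [show m + 1 + 1 = m + 2 from rfl] at hbe
        have h2 : phi (BTree.node a b) (m + 1) + F S (m + 2) ≤ F (BTree.node a b ::ₘ S) (m + 1) :=
          F_choice (Multiset.mem_cons_self _ _) (m + 1) |>.trans_eq'
            (by rw [Multiset.erase_cons_head])
        have h5 : 1 + (phi a m + phi b (m + 1)) ≤ phi (BTree.node a b) (m + 1) := by
          rw [hnode]; exact Nat.add_le_add_left (le_max_left _ _) 1
        omega
      · -- b ∈ S
        rw [erase_cons_mem hbS] at hbe
        rw [show m + 1 + 1 = m + 2 from rfl] at hbe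
        have h1 : phi a (m + 1) + F (r ::ₘ S.erase b) (m + 2) ≤ F (a ::ₘ r ::ₘ S.erase b) (m + 1) :=
          F_choice (Multiset.mem_cons_self _ _) (m + 1) |>.trans_eq'
            (by rw [Multiset.erase_cons_head])
        have h2 : 1 + F (a ::ₘ r ::ₘ S.erase b) (m + 1) ≤ F (BTree.node a r ::ₘ S.erase b) (m + 2) :=
          ih _ (Multiset.erase_lt.2 hbS) (m + 1)
        have h3 : phi b (m + 1) + F ((BTree.node a r ::ₘ S).erase b) (m + 2) ≤
            F (BTree.node a r ::ₘ S) (m + 1) :=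
          F_choice (Multiset.mem_cons_of_mem hbS) (m + 1)
        rw [erase_cons_mem hbS] at h3
        have h4 : phi a m ≤ phi a (m + 1) := phi_mono a m
        omega
    rcases Multiset.mem_cons.1 ha' with rfl | haS
    · -- a = r
      have her : (l ::ₘ a ::ₘ S).erase a = l ::ₘ S := by
        rw [erase_cons_mem (Multiset.mem_cons_self _ _), Multiset.erase_cons_head]
      rw [her] at hle
      obtain ⟨b, hb, hbe⟩ := F_attain (S := l ::ₘ S) (by simp) (m + 1)
      rcases Multiset.mem_cons.1 hb with rfl | hbS
      · -- b = l
        rw [Multiset.erase_cons_head] at hbe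
        rw [show m + 1 + 1 = m + 2 from rfl] at hbe
        have h2 : phi (BTree.node b a) (m + 1) + F S (m + 2) ≤ F (BTree.node b a ::ₘ S) (m + 1) :=
          F_choice (Multiset.mem_cons_self _ _) (m + 1) |>.trans_eq'
            (by rw [Multiset.erase_cons_head])
        have h5 : 1 + (phi a m + phi b (m + 1)) ≤ phi (BTree.node b a) (m + 1) := by
          rw [hnode]; exact Nat.add_le_add_left (le_max_right _ _) 1
        omega
      · -- b ∈ S
        rw [erase_cons_mem hbS] at hbe
        rw [show m + 1 + 1 = m + 2 from rfl] at hbe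
        have h1 : phi a (m + 1) + F (l ::ₘ S.erase b) (m + 2) ≤ F (l ::ₘ a ::ₘ S.erase b) (m + 1) := by
          have := F_choice (a := a) (S := l ::ₘ a ::ₘ S.erase b)
            (Multiset.mem_cons_of_mem (Multiset.mem_cons_self _ _)) (m + 1)
          rwa [erase_cons_mem (Multiset.mem_cons_self _ _), Multiset.erase_cons_head] at this
        have h2 : 1 + F (l ::ₘ a ::ₘ S.erase b) (m + 1) ≤ F (BTree.node l a ::ₘ S.erase b) (m + 2) :=
          ih _ (Multiset.erase_lt.2 hbS) (m + 1)
        have h3 : phi b (m + 1) + F ((BTree.node l a ::ₘ S).erase b) (m + 2) ≤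
            F (BTree.node l a ::ₘ S) (m + 1) :=
          F_choice (Multiset.mem_cons_of_mem hbS) (m + 1)
        rw [erase_cons_mem hbS] at h3
        have h4 : phi a m ≤ phi a (m + 1) := phi_mono a m
        omega
    · -- a ∈ S
      have her : (l ::ₘ r ::ₘ S).erase a = l ::ₘ r ::ₘ S.erase a := by
        rw [erase_cons_mem (Multiset.mem_cons_of_mem haS), erase_cons_mem haS]
      rw [her] at hle
      have h2 : 1 + F (l ::ₘ r ::ₘ S.erase a) (m + 1) ≤ F (BTree.node l r ::ₘ S.erase a) (m + 2) :=
        ih _ (Multiset.erase_lt.2 haS) (m + 1)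
      have h3 : phi a (m + 1) + F ((BTree.node l r ::ₘ S).erase a) (m + 2) ≤
          F (BTree.node l r ::ₘ S) (m + 1) :=
        F_choice (Multiset.mem_cons_of_mem haS) (m + 1)
      rw [erase_cons_mem haS] at h3
      have h4 : phi a m ≤ phi a (m + 1) := phi_mono a m
      omega

/-! ### Upper bound: steals ≤ F -/

lemma steals_le_F : ∀ (N : ℕ) (S : Multiset BTree) (m : ℕ), minode S ≤ N →
    steals (S + Multiset.replicate m BTree.triv) ≤ F S m := by
  intro N
  induction N using Nat.strong_induction_on with
  | _ N ihN =>
  intro S m hN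
  rcases Nat.eq_zero_or_pos (steals (S + Multiset.replicate m BTree.triv)) with h0 | hpos
  · rw [h0]; exact Nat.zero_le _
  obtain ⟨c, hc⟩ : ∃ c, steals (S + Multiset.replicate m BTree.triv) = c + 1 :=
    ⟨steals (S + Multiset.replicate m BTree.triv) - 1, by omega⟩
  have hseq := stealSeq_steals (S + Multiset.replicate m BTree.triv)
  rw [hc] at hseq
  obtain ⟨Y, ⟨U, l, r, S₀, hXeq, rfl⟩, hs⟩ := hseq
  have hcY : c ≤ steals (l ::ₘ r ::ₘ S₀) := le_steals hs
  have hnode_mem : BTree.node l r ∈ S := by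
    have h1 : BTree.node l r ∈ S + Multiset.replicate m BTree.triv := by
      rw [hXeq]; exact Multiset.mem_cons_of_mem (Multiset.mem_cons_self _ _)
    rcases Multiset.mem_add.1 h1 with h | h
    · exact h
    · exact absurd (Multiset.eq_of_mem_replicate h) (by simp)
  set S₁ := S.erase (BTree.node l r) with hS₁
  have hSdec : S = BTree.node l r ::ₘ S₁ := (Multiset.cons_erase hnode_mem).symm
  have hUS₀ : U ::ₘ S₀ = S₁ + Multiset.replicate m BTree.triv := by
    have h1 : BTree.node l r ::ₘ (U ::ₘ S₀) =
        BTree.node l r ::ₘ (S₁ + Multiset.replicate m BTree.triv) := by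
      rw [← Multiset.cons_add, ← hSdec, hXeq]
      simp only [← Multiset.singleton_add, ← add_assoc]
      ac_rfl
    exact (Multiset.cons_inj_right _).1 h1
  by_cases hUmem : U ∈ S₁
  · -- the destroyed tree U comes from S
    have hS₀eq : S₀ = S₁.erase U + Multiset.replicate m BTree.triv := by
      have h2 : U ::ₘ S₀ = U ::ₘ (S₁.erase U + Multiset.replicate m BTree.triv) := by
        rw [hUS₀, ← Multiset.cons_add, Multiset.cons_erase hUmem]
      exact (Multiset.cons_inj_right _).1 h2
    have hY : l ::ₘ r ::ₘ S₀ = (l ::ₘ r ::ₘ S₁.erase U) + Multiset.replicate m BTree.triv := by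
      rw [hS₀eq]; simp [Multiset.cons_add]
    have e2 : minode S₁ = inode U + minode (S₁.erase U) := by
      conv_lhs => rw [← Multiset.cons_erase hUmem]
      rw [minode_cons]
    have hmin : minode (l ::ₘ r ::ₘ S₁.erase U) < minode S := by
      rw [hSdec, minode_cons, minode_cons, minode_cons]
      simp only [inode]
      omega
    have hIH : steals ((l ::ₘ r ::ₘ S₁.erase U) + Multiset.replicate m BTree.triv) ≤
        F (l ::ₘ r ::ₘ S₁.erase U) m := ihN (minode (l ::ₘ r ::ₘ S₁.erase U)) (by omega) _ m le_rfl
    have hKey : 1 + F (l ::ₘ r ::ₘ S₁.erase U) m ≤ F (BTree.node l r ::ₘ S₁.erase U) (m + 1) :=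
      F_key l r _ m
    have hch : phi U m + F (S.erase U) (m + 1) ≤ F S m :=
      F_choice (by rw [hSdec]; exact Multiset.mem_cons_of_mem hUmem) m
    have herase : S.erase U = BTree.node l r ::ₘ S₁.erase U := by
      conv_lhs => rw [hSdec]
      exact erase_cons_mem hUmem
    rw [herase] at hch
    rw [hY] at hcY
    omega
  · -- the destroyed tree U is one of the idle (trivial) processors
    have hUrep : U ∈ Multiset.replicate m BTree.triv := by
      have h1 : U ∈ U ::ₘ S₀ := Multiset.mem_cons_self _ _
      rw [hUS₀] at h1
      rcases Multiset.mem_add.1 h1 with h | h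
      · exact absurd h hUmem
      · exact h
    have hU : U = BTree.triv := Multiset.eq_of_mem_replicate hUrep
    cases m with
    | zero => simp at hUrep
    | succ m'' =>
      have hS₀eq : S₀ = S₁ + Multiset.replicate m'' BTree.triv := by
        have h2 : U ::ₘ S₀ = U ::ₘ (S₁ + Multiset.replicate m'' BTree.triv) := by
          rw [hUS₀, Multiset.replicate_succ, hU]
          simp only [← Multiset.singleton_add, ← add_assoc]
          ac_rfl
        exact (Multiset.cons_inj_right _).1 h2
      have hY : l ::ₘ r ::ₘ S₀ = (l ::ₘ r ::ₘ S₁) + Multiset.replicate m'' BTree.triv := by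
        rw [hS₀eq]; simp [Multiset.cons_add]
      have hmin : minode (l ::ₘ r ::ₘ S₁) < minode S := by
        rw [hSdec, minode_cons, minode_cons, minode_cons]
        simp only [inode]
        omega
      have hIH : steals ((l ::ₘ r ::ₘ S₁) + Multiset.replicate m'' BTree.triv) ≤
          F (l ::ₘ r ::ₘ S₁) m'' := ihN (minode (l ::ₘ r ::ₘ S₁)) (by omega) _ m'' le_rfl
      have hKey : 1 + F (l ::ₘ r ::ₘ S₁) m'' ≤ F (BTree.node l r ::ₘ S₁) (m'' + 1) :=
        F_key l r _ m''
      rw [← hSdec] at hKey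
      rw [hY] at hcY
      omega

/-! ### Lower bound: G ≤ steals -/

lemma G_le_steals : ∀ (N : ℕ) (p : List BTree) (m : ℕ),
    2 * minode ↑p + p.length ≤ N →
    G p m ≤ steals (↑p + Multiset.replicate m BTree.triv) := by
  intro N
  induction N using Nat.strong_induction_on with
  | _ N ihN =>
  intro p m hN
  cases p with
  | nil => simp [G]
  | cons T q =>
    cases T with
    | triv =>
      have hG : G (BTree.triv :: q) m = G q (m + 1) := by simp [G, phi]
      have hms : (↑(BTree.triv :: q) : Multiset BTree) + Multiset.replicate m BTree.triv =
          ↑q + Multiset.replicate (m + 1) BTree.triv := by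
        rw [← Multiset.cons_coe, Multiset.replicate_succ]
        simp only [← Multiset.singleton_add, ← add_assoc]
        ac_rfl
      rw [hG, hms]
      apply ihN (2 * minode ↑q + q.length) _ q (m + 1) le_rfl
      have h1 : minode ↑(BTree.triv :: q) = minode ↑q := by
        rw [← Multiset.cons_coe, minode_cons]; simp [inode]
      have h2 : (BTree.triv :: q).length = q.length + 1 := rfl
      omega
    | node l r =>
      have hmin : minode ↑(BTree.node l r :: q) = 1 + inode l + inode r + minode ↑q := by
        rw [← Multiset.cons_coe, minode_cons]; simp [inode]
      cases m with
      | zero =>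
        have hG : G (BTree.node l r :: q) 0 = G q 1 := by simp [G, phi]
        have hq : G q 1 ≤ steals (↑q + Multiset.replicate 1 BTree.triv) := by
          apply ihN (2 * minode ↑q + q.length) _ q 1 le_rfl
          have h2 : (BTree.node l r :: q).length = q.length + 1 := rfl
          omega
        have hmono := steals_triv_mono (BTree.node l r) ↑q
        have hms1 : (↑q : Multiset BTree) + Multiset.replicate 1 BTree.triv =
            BTree.triv ::ₘ ↑q := by
          rw [Multiset.replicate_one]
          simp only [← Multiset.singleton_add]
          ac_rfl
        have hms2 : (↑(BTree.node l r :: q) : Multiset BTree) + Multiset.replicate 0 BTree.triv =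
            BTree.node l r ::ₘ ↑q := by
          simp
        rw [hG, hms2]
        rw [hms1] at hq
        omega
      | succ m'' =>
        cases q with
        | nil =>
          -- single tree: do the first steal and use the two orders of [l, r]
          have hstep : StealStep (BTree.node l r ::ₘ Multiset.replicate (m'' + 1) BTree.triv)
              (l ::ₘ r ::ₘ Multiset.replicate m'' BTree.triv) := by
            refine ⟨BTree.triv, l, r, Multiset.replicate m'' BTree.triv, ?_, rfl⟩
            rw [Multiset.replicate_succ]
            exact Multiset.cons_swap _ _ _
          have h1 := stealStep_steals hstep
          have h2 : G [l, r] m'' ≤ steals (↑[l, r] + Multiset.replicate m'' BTree.triv) := by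
            apply ihN (2 * minode ↑[l, r] + 2) _ [l, r] m'' le_rfl
            have e1 : minode ↑[l, r] = inode l + inode r := by
              simp [minode, inode]
            rw [e1]
            simp only [hmin] at hN
            simp only [List.length] at hN ⊢
            omega
          have h3 : G [r, l] m'' ≤ steals (↑[r, l] + Multiset.replicate m'' BTree.triv) := by
            apply ihN (2 * minode ↑[r, l] + 2) _ [r, l] m'' le_rfl
            have e1 : minode ↑[r, l] = inode r + inode l := by
              simp [minode, inode]
            rw [e1]
            simp only [hmin] at hN
            simp only [List.length] at hN ⊢
            omega
          have hms : (↑[l, r] : Multiset BTree) + Multiset.replicate m'' BTree.triv =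
              l ::ₘ r ::ₘ Multiset.replicate m'' BTree.triv := by
            simp only [← Multiset.cons_coe, Multiset.coe_nil, Multiset.cons_add, zero_add]
          have hms' : (↑[r, l] : Multiset BTree) + Multiset.replicate m'' BTree.triv =
              l ::ₘ r ::ₘ Multiset.replicate m'' BTree.triv := by
            simp only [← Multiset.cons_coe, Multiset.coe_nil, Multiset.cons_add, zero_add]
            exact Multiset.cons_swap _ _ _
          rw [hms] at h2
          rw [hms'] at h3
          have hGp : G [BTree.node l r] (m'' + 1) =
              1 + max (phi l m'' + phi r (m'' + 1)) (phi r m'' + phi l (m'' + 1)) := by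
            simp [G, phi]
          have hG2 : G [l, r] m'' = phi l m'' + phi r (m'' + 1) := by simp [G]
          have hG3 : G [r, l] m'' = phi r m'' + phi l (m'' + 1) := by simp [G]
          have hms'' : (↑[BTree.node l r] : Multiset BTree) +
              Multiset.replicate (m'' + 1) BTree.triv =
              BTree.node l r ::ₘ Multiset.replicate (m'' + 1) BTree.triv := by
            simp only [← Multiset.cons_coe, Multiset.coe_nil, Multiset.cons_add, zero_add]
          rw [hms'', hGp]
          rcases max_choice (phi l m'' + phi r (m'' + 1)) (phi r m'' + phi l (m'' + 1)) with
            he | he <;> rw [he] <;> omega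
        | cons T' q' =>
          -- run the first tree to completion, then the rest
          set q := T' :: q' with hq
          clear_value q
          set c := steals (BTree.node l r ::ₘ Multiset.replicate (m'' + 1) BTree.triv) with hcdef
          have hcard : 2 ≤ Multiset.card
              (BTree.node l r ::ₘ Multiset.replicate (m'' + 1) BTree.triv) := by
            simp
          have hfull := steals_fullrun hcard
          have hcard2 : Multiset.card
              (BTree.node l r ::ₘ Multiset.replicate (m'' + 1) BTree.triv) = m'' + 2 := by
            simp
          rw [hcard2] at hfull
          have hlift := stealSeqTo_add (↑q : Multiset BTree) hfull
          have htail : StealSeq (steals (↑q + Multiset.replicate (m'' + 2) BTree.triv))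
              (Multiset.replicate (m'' + 2) BTree.triv + ↑q) := by
            rw [add_comm]
            exact stealSeq_steals _
          have hcomp := stealSeqTo_append hlift htail
          have hms : BTree.node l r ::ₘ Multiset.replicate (m'' + 1) BTree.triv + ↑q =
              (↑(BTree.node l r :: q) : Multiset BTree) +
                Multiset.replicate (m'' + 1) BTree.triv := by
            rw [← Multiset.cons_coe, Multiset.cons_add, Multiset.cons_add,
              add_comm (Multiset.replicate (m'' + 1) BTree.triv) (↑q : Multiset BTree)]
          rw [hms] at hcomp
          have hle := le_steals hcomp
          -- c is at least phi (node l r) (m''+1)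
          have hc1 : G [BTree.node l r] (m'' + 1) ≤
              steals (↑[BTree.node l r] + Multiset.replicate (m'' + 1) BTree.triv) := by
            apply ihN (2 * minode ↑[BTree.node l r] + 1) _ [BTree.node l r] (m'' + 1) le_rfl
            have e1 : minode ↑[BTree.node l r] = 1 + inode l + inode r := by
              simp [minode, inode]
            rw [e1]
            simp only [hmin] at hN
            have : q.length = q'.length + 1 := by rw [hq]; rfl
            simp only [List.length] at hN
            omega
          have hms2 : (↑[BTree.node l r] : Multiset BTree) +
              Multiset.replicate (m'' + 1) BTree.triv =
              BTree.node l r ::ₘ Multiset.replicate (m'' + 1) BTree.triv := by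
            simp only [← Multiset.cons_coe, Multiset.coe_nil, Multiset.cons_add, zero_add]
          rw [hms2] at hc1
          have hG1 : G [BTree.node l r] (m'' + 1) = phi (BTree.node l r) (m'' + 1) := by
            simp [G]
          -- the tail is at least G q (m''+2)
          have hq2 : G q (m'' + 2) ≤ steals (↑q + Multiset.replicate (m'' + 2) BTree.triv) := by
            apply ihN (2 * minode ↑q + q.length) _ q (m'' + 2) le_rfl
            simp only [hmin] at hN
            have : (BTree.node l r :: q).length = q.length + 1 := rfl
            omega
          have hGp : G (BTree.node l r :: q) (m'' + 1) =
              phi (BTree.node l r) (m'' + 1) + G q (m'' + 2) := by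
            simp [G]
          rw [hGp]
          omega

/-! ### The main characterization -/

lemma steals_eq_F (S : Multiset BTree) (m : ℕ) :
    steals (S + Multiset.replicate m BTree.triv) = F S m := by
  apply le_antisymm
  · exact steals_le_F (minode S) S m le_rfl
  · apply F_le
    intro p hp
    have h := G_le_steals (2 * minode ↑p + p.length) p m le_rfl
    rwa [hp] at h

lemma F_singleton (T : BTree) (m : ℕ) : F {T} m = phi T m := by
  apply le_antisymm
  · apply F_le
    intro p hp
    rw [Multiset.coe_eq_singleton] at hp
    subst hp
    simp [G]
  · have h : G [T] m ≤ F {T} m := G_le_F (by simp) m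
    simpa [G] using h

lemma Phi_eq_phi (T : BTree) (n : ℕ) : Phi T n = phi T n := by
  unfold Phi
  have hms : T ::ₘ Multiset.replicate n BTree.triv =
      ({T} : Multiset BTree) + Multiset.replicate n BTree.triv := by
    rw [Multiset.singleton_add]
  rw [hms, steals_eq_F, F_singleton]

lemma coe_eq_pair {p : List BTree} {A B : BTree} (hp : (↑p : Multiset BTree) = A ::ₘ {B}) :
    p = [A, B] ∨ p = [B, A] := by
  have hlen : p.length = 2 := by
    have h := congrArg Multiset.card hp
    simpa using h
  match p, hlen with
  | [x, y], _ =>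
    have hxy : (x ::ₘ {y} : Multiset BTree) = A ::ₘ {B} := by
      simpa [← Multiset.cons_coe] using hp
    rcases Multiset.cons_eq_cons.1 hxy with ⟨rfl, h2⟩ | ⟨hne, cs, h1, h2⟩
    · left
      rw [Multiset.singleton_inj] at h2
      rw [h2]
    · have hcs : cs = 0 := by
        have hcard := congrArg Multiset.card h1
        simp at hcard
        first
        | exact hcard
        | exact hcard.symm
        | exact Multiset.card_eq_zero.1 hcard
        | exact Multiset.card_eq_zero.1 hcard.symm
      subst hcs
      have hyA : y = A := by
        rw [Multiset.cons_zero, Multiset.singleton_inj] at h1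
        exact h1
      have hxB : x = B := by
        rw [Multiset.cons_zero, Multiset.singleton_inj] at h2
        exact h2.symm
      right
      rw [hyA, hxB]

lemma F_pair (A B : BTree) (m : ℕ) :
    F (A ::ₘ {B}) m = max (phi A m + phi B (m + 1)) (phi B m + phi A (m + 1)) := by
  apply le_antisymm
  · apply F_le
    intro p hp
    rcases coe_eq_pair hp with rfl | rfl
    · simp only [G]
      exact le_trans (by omega) (le_max_left _ _)
    · simp only [G]
      exact le_trans (by omega) (le_max_right _ _)
  · apply max_le
    · have h : G [A, B] m ≤ F (A ::ₘ {B}) m := G_le_F (by simp [← Multiset.cons_coe]) m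
      simpa [G] using h
    · have h : G [B, A] m ≤ F (A ::ₘ {B}) m := by
        apply G_le_F _ m
        simp only [← Multiset.cons_coe, Multiset.coe_nil, Multiset.cons_zero]
        exact Multiset.cons_swap _ _ _
      simpa [G] using h

lemma Phi_node_succ (Tl Tr : BTree) (m : ℕ) :
    Phi (BTree.node Tl Tr) (m + 1) =
      1 + steals (Tl ::ₘ Tr ::ₘ Multiset.replicate m BTree.triv) := by
  unfold Phi
  apply le_antisymm
  · rcases Nat.eq_zero_or_pos
        (steals (BTree.node Tl Tr ::ₘ Multiset.replicate (m + 1) BTree.triv)) with h0 | hpos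
    · rw [h0]; omega
    obtain ⟨c, hc⟩ : ∃ c, steals (BTree.node Tl Tr ::ₘ Multiset.replicate (m + 1) BTree.triv)
        = c + 1 :=
      ⟨steals (BTree.node Tl Tr ::ₘ Multiset.replicate (m + 1) BTree.triv) - 1, by omega⟩
    have hseq := stealSeq_steals (BTree.node Tl Tr ::ₘ Multiset.replicate (m + 1) BTree.triv)
    rw [hc] at hseq
    obtain ⟨Y, ⟨U, l, r, S₀, heq, rfl⟩, hs⟩ := hseq
    have hmem : BTree.node l r ∈ BTree.node Tl Tr ::ₘ Multiset.replicate (m + 1) BTree.triv := by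
      rw [heq]
      exact Multiset.mem_cons_of_mem (Multiset.mem_cons_self _ _)
    have hlr : l = Tl ∧ r = Tr := by
      rcases Multiset.mem_cons.1 hmem with h | h
      · injection h with h1 h2; exact ⟨h1, h2⟩
      · exact absurd (Multiset.eq_of_mem_replicate h) (by simp)
    rw [hlr.1, hlr.2] at heq hs
    have hUS₀ : U ::ₘ S₀ = Multiset.replicate (m + 1) BTree.triv := by
      have h1 : BTree.node Tl Tr ::ₘ (U ::ₘ S₀) =
          BTree.node Tl Tr ::ₘ Multiset.replicate (m + 1) BTree.triv := by
        rw [heq]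
        exact (Multiset.cons_swap _ _ _).symm
      exact (Multiset.cons_inj_right _).1 h1.symm |>.symm
    have hU : U = BTree.triv := by
      have : U ∈ Multiset.replicate (m + 1) BTree.triv := by
        rw [← hUS₀]; exact Multiset.mem_cons_self _ _
      exact Multiset.eq_of_mem_replicate this
    have hS₀ : S₀ = Multiset.replicate m BTree.triv := by
      rw [hU, Multiset.replicate_succ] at hUS₀
      exact (Multiset.cons_inj_right _).1 hUS₀
    subst hS₀
    have := le_steals hs
    omega
  · have hstep : StealStep (BTree.node Tl Tr ::ₘ Multiset.replicate (m + 1) BTree.triv)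
        (Tl ::ₘ Tr ::ₘ Multiset.replicate m BTree.triv) := by
      refine ⟨BTree.triv, Tl, Tr, Multiset.replicate m BTree.triv, ?_, rfl⟩
      rw [Multiset.replicate_succ]
      exact Multiset.cons_swap _ _ _
    exact stealStep_steals hstep

theorem potential_recurrence (Tl Tr : BTree) (n : ℕ) (hn : 1 ≤ n) :
    Phi (BTree.node Tl Tr) n =
      1 + max (Phi Tl (n - 1) + Phi Tr n) (Phi Tr (n - 1) + Phi Tl n) := by
  obtain ⟨m, rfl⟩ : ∃ m, n = m + 1 := ⟨n - 1, by omega⟩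
  rw [Phi_node_succ]
  have h1 : Tl ::ₘ Tr ::ₘ Multiset.replicate m BTree.triv =
      (Tl ::ₘ {Tr}) + Multiset.replicate m BTree.triv := by
    rw [Multiset.cons_add, Multiset.singleton_add]
  rw [h1, steals_eq_F, F_pair]
  simp only [Phi_eq_phi, Nat.add_sub_cancel]
end

section
/- For all integers k ≥ 2, h ≥ 0, 1 ≤ b ≤ k−1, and n ≥ 0, the n-th potential of the almost complete k-ary tree satisfies Φ_R(ACT(b, k, h), n) = ∑_{i=1}^{n} (k−1)^i · C(h, i) + (b−1) · ∑_{i=0}^{n−1} (k−1)^i · C(h, i). -/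
/-- A rooted tree: a root with a finite ordered list of children. -/
inductive RTree : Type
  | node : List RTree → RTree

/-- A rooted computation tree: no node has exactly one child. -/
inductive RTree.Valid : RTree → Prop
  | mk (cs : List RTree) (hlen : cs.length ≠ 1) (hc : ∀ c ∈ cs, RTree.Valid c) :
      RTree.Valid (RTree.node cs)

/-- A steal step on a multiset of rooted computation trees: choose an arbitrary tree `U`
and a tree whose root has children `cs ++ [c]` (at least two children); the stolen subtree
is the last child `c`, and the remainder is the root with the other children if there were
more than two, or the single other child if there were exactly two. -/
def RStealStep (S S' : Multiset RTree) : Prop :=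
  ∃ (U c : RTree) (cs : List RTree) (S₀ : Multiset RTree),
    S = U ::ₘ RTree.node (cs ++ [c]) ::ₘ S₀ ∧
      ((∃ a, cs = [a] ∧ S' = a ::ₘ c ::ₘ S₀) ∨
        (2 ≤ cs.length ∧ S' = RTree.node cs ::ₘ c ::ₘ S₀))

/-- `RStealSeq n S` means there exists a sequence of `n` steal steps starting from `S`. -/
def RStealSeq : ℕ → Multiset RTree → Prop
  | 0, _ => True
  | n + 1, S => ∃ S', RStealStep S S' ∧ RStealSeq n S'

/-- The maximum length of a sequence of steal steps starting from `S`. -/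
noncomputable def stealsR (S : Multiset RTree) : ℕ :=
  sSup {n | RStealSeq n S}

/-- The `n`-th potential of a rooted computation tree `T`. -/
noncomputable def PhiR (T : RTree) (n : ℕ) : ℕ :=
  stealsR (T ::ₘ Multiset.replicate n (RTree.node []))

/-- The complete `k`-ary tree of height `h`. -/
def CKT (k : ℕ) : ℕ → RTree
  | 0 => RTree.node []
  | h + 1 => RTree.node (List.replicate k (CKT k h))

/-- The almost complete `k`-ary tree with `b · k^h` leaves: the complete `k`-ary tree
of height `h` if `b = 1`, and a root with `b` children each equal to `CKT k h` if `b ≥ 2`. -/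
def ACT (b k h : ℕ) : RTree :=
  if b = 1 then CKT k h else RTree.node (List.replicate b (CKT k h))

namespace WS

/-! ### Arithmetic layer: the potential function on keys -/

lemma eq_of_perm_of_sorted {l₁ l₂ : List ℕ} (hp : l₁.Perm l₂) (h1 : l₁.Pairwise (· ≤ ·))
    (h2 : l₂.Pairwise (· ≤ ·)) : l₁ = l₂ :=
  hp.eq_of_pairwise' h1 h2

variable (k : ℕ)

/-- `Gg k h t = ∑_{i<t} (k-1)^i C(h,i)` -/
def Gg (h t : ℕ) : ℕ := ∑ i ∈ Finset.range t, (k - 1) ^ i * h.choose i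

/-- `g0 k h t = ∑_{1≤i≤t} (k-1)^i C(h,i)` -/
def g0 (h t : ℕ) : ℕ := ∑ i ∈ Finset.Icc 1 t, (k - 1) ^ i * h.choose i

/-- potential of the tree with key `K`, with budget `t`. -/
def gg (K t : ℕ) : ℕ := g0 k (K / k) t + (K % k) * Gg k (K / k) t

/-- budget-increment of `gg`. -/
def DD (K t : ℕ) : ℕ :=
  (k - 1) ^ (t + 1) * (K / k).choose (t + 1) + (K % k) * ((k - 1) ^ t * (K / k).choose t)

/-- remainder key of a steal from key `K` -/
def AK (K : ℕ) : ℕ := if k ∣ K then K - 2 else K - 1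

/-- stolen key of a steal from key `K` -/
def BK (K : ℕ) : ℕ := k * ((K - 1) / k)

lemma Gg_succ (h t : ℕ) : Gg k h (t + 1) = Gg k h t + (k - 1) ^ t * h.choose t :=
  Finset.sum_range_succ _ _

lemma g0_succ (h t : ℕ) : g0 k h (t + 1) = g0 k h t + (k - 1) ^ (t + 1) * h.choose (t + 1) :=
  Finset.sum_Icc_succ_top (Nat.le_add_left 1 t) _

@[simp] lemma Gg_zero (h : ℕ) : Gg k h 0 = 0 := rfl

@[simp] lemma g0_zero (h : ℕ) : g0 k h 0 = 0 := by
  simp [g0]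

lemma Gg_succ_bot (h t : ℕ) : Gg k h (t + 1) = g0 k h t + 1 := by
  induction t with
  | zero => simp [Gg]
  | succ t ih =>
      rw [Gg_succ, ih, g0_succ]
      ring

lemma pascal (h t : ℕ) : g0 k (h + 1) t = g0 k h t + (k - 1) * Gg k h t := by
  induction t with
  | zero => simp
  | succ t ih =>
      rw [g0_succ, g0_succ, Gg_succ, ih, Nat.choose_succ_succ]
      ring

lemma kpos (hk : 2 ≤ k) : 0 < k := by omega

lemma div_mul_add (hk : 2 ≤ k) {h r : ℕ} (hr : r < k) : (k * h + r) / k = h := by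
  rw [Nat.mul_add_div (kpos k hk), Nat.div_eq_of_lt hr, Nat.add_zero]

lemma mod_mul_add (hk : 2 ≤ k) {h r : ℕ} (hr : r < k) : (k * h + r) % k = r := by
  rw [Nat.mul_add_mod, Nat.mod_eq_of_lt hr]

lemma gg_mul_add (hk : 2 ≤ k) {h r : ℕ} (hr : r < k) (t : ℕ) :
    gg k (k * h + r) t = g0 k h t + r * Gg k h t := by
  rw [gg, div_mul_add k hk hr, mod_mul_add k hk hr]

lemma DD_mul_add (hk : 2 ≤ k) {h r : ℕ} (hr : r < k) (t : ℕ) :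
    DD k (k * h + r) t
      = (k - 1) ^ (t + 1) * h.choose (t + 1) + r * ((k - 1) ^ t * h.choose t) := by
  rw [DD, div_mul_add k hk hr, mod_mul_add k hk hr]

@[simp] lemma gg_zero_t (K : ℕ) : gg k K 0 = 0 := by simp [gg]

lemma gg_zero_key (hk : 2 ≤ k) (t : ℕ) : gg k 0 t = 0 := by
  have h0 : (0 : ℕ) / k = 0 := Nat.zero_div k
  have h1 : (0 : ℕ) % k = 0 := Nat.zero_mod k
  rw [gg, h0, h1]
  simp [g0]
  intro i hi _
  simp [Nat.choose_eq_zero_of_lt hi]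

lemma gstep (K t : ℕ) : gg k K (t + 1) = gg k K t + DD k K t := by
  rw [gg, gg, DD, g0_succ, Gg_succ]
  ring

lemma DD_succ_le (hk : 2 ≤ k) (K t : ℕ) : DD k K t ≤ DD k (K + 1) t := by
  obtain ⟨h, r, hrk, rfl⟩ : ∃ h r, r < k ∧ K = k * h + r :=
    ⟨K / k, K % k, Nat.mod_lt _ (kpos k hk), (Nat.div_add_mod K k).symm⟩
  have hmul : k * (h + 1) = k * h + k := by ring
  by_cases hcross : r + 1 = k
  · have h1 : k * h + r + 1 = k * (h + 1) + 0 := by omega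
    rw [h1, DD_mul_add k hk (kpos k hk), DD_mul_add k hk hrk, Nat.choose_succ_succ]
    have hr : r = k - 1 := by omega
    subst hr
    simp only [Nat.succ_eq_add_one]
    have hdist : (k - 1) ^ (t+1) * (h.choose t + h.choose (t+1))
        = (k - 1) ^ (t+1) * h.choose t + (k - 1) ^ (t+1) * h.choose (t+1) := by ring
    have hcomb : (k - 1) * ((k - 1) ^ t * h.choose t) = (k - 1) ^ (t+1) * h.choose t := by
      rw [pow_succ]; ring
    omega
  · have h1 : k * h + r + 1 = k * h + (r + 1) := by omega
    have hr1 : r + 1 < k := by omega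
    rw [h1, DD_mul_add k hk hr1, DD_mul_add k hk hrk]
    have : (r+1) * ((k - 1) ^ t * h.choose t) = r * ((k - 1) ^ t * h.choose t) + (k - 1) ^ t * h.choose t := by ring
    omega

lemma DD_mono (hk : 2 ≤ k) {K K' : ℕ} (hKK : K ≤ K') (t : ℕ) : DD k K t ≤ DD k K' t := by
  induction K', hKK using Nat.le_induction with
  | base => exact le_rfl
  | succ n hn ih => exact le_trans ih (DD_succ_le k hk n t)

lemma gg_succ_le (hk : 2 ≤ k) (K t : ℕ) : gg k K t ≤ gg k (K + 1) t := by
  obtain ⟨h, r, hrk, rfl⟩ : ∃ h r, r < k ∧ K = k * h + r :=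
    ⟨K / k, K % k, Nat.mod_lt _ (kpos k hk), (Nat.div_add_mod K k).symm⟩
  have hmul : k * (h + 1) = k * h + k := by ring
  by_cases hcross : r + 1 = k
  · have h1 : k * h + r + 1 = k * (h + 1) + 0 := by omega
    rw [h1, gg_mul_add k hk (kpos k hk), gg_mul_add k hk hrk, pascal]
    have hr : r = k - 1 := by omega
    subst hr
    omega
  · have h1 : k * h + r + 1 = k * h + (r + 1) := by omega
    have hr1 : r + 1 < k := by omega
    rw [h1, gg_mul_add k hk hr1, gg_mul_add k hk hrk]
    have : (r+1) * Gg k h t = r * Gg k h t + Gg k h t := by ring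
    omega

lemma gg_monoK (hk : 2 ≤ k) {K K' : ℕ} (hKK : K ≤ K') (t : ℕ) : gg k K t ≤ gg k K' t := by
  induction K', hKK using Nat.le_induction with
  | base => exact le_rfl
  | succ n hn ih => exact le_trans ih (gg_succ_le k hk n t)

lemma gg_monoT (hk : 2 ≤ k) (K : ℕ) {t t' : ℕ} (htt : t ≤ t') : gg k K t ≤ gg k K t' := by
  induction t', htt using Nat.le_induction with
  | base => exact le_rfl
  | succ n hn ih => rw [gstep]; omega

/-- exchange inequality -/
lemma g3s (hk : 2 ≤ k) {x y : ℕ} (hxy : x ≤ y) (t : ℕ) :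
    gg k x (t + 1) + gg k y t ≤ gg k x t + gg k y (t + 1) := by
  rw [gstep, gstep]
  have := DD_mono k hk hxy t
  omega

lemma gg_pred_dvd (hk : 2 ≤ k) {K : ℕ} (hd : k ∣ K) (hK : 1 ≤ K) (t : ℕ) :
    gg k K t = gg k (K - 1) t := by
  obtain ⟨h, rfl⟩ := hd
  have hh : 1 ≤ h := by
    rcases Nat.eq_zero_or_pos h with h0 | h1
    · subst h0; simp at hK
    · exact h1
  obtain ⟨h', rfl⟩ : ∃ h', h = h' + 1 := ⟨h - 1, by omega⟩
  have e1 : k * (h' + 1) = k * h' + k := by ring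
  have e2 : k * (h' + 1) - 1 = k * h' + (k - 1) := by omega
  have e3 : k * (h' + 1) = k * (h' + 1) + 0 := by omega
  rw [e2, gg_mul_add k hk (by omega : k - 1 < k)]
  conv_lhs => rw [e3]
  rw [gg_mul_add k hk (kpos k hk), pascal]
  omega

/-- The fundamental identity: `g B t + g A (t+1) + 1 = g K (t+1)`. -/
lemma ID1 (hk : 2 ≤ k) {K : ℕ} (hK : 1 ≤ K) (t : ℕ) :
    gg k (BK k K) t + gg k (AK k K) (t + 1) + 1 = gg k K (t + 1) := by
  by_cases hd : k ∣ K
  · obtain ⟨h, rfl⟩ := hd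
    have hh : 1 ≤ h := by
      rcases Nat.eq_zero_or_pos h with h0 | h1
      · subst h0; simp at hK
      · exact h1
    obtain ⟨h', rfl⟩ : ∃ h', h = h' + 1 := ⟨h - 1, by omega⟩
    have e1 : k * (h' + 1) = k * h' + k := by ring
    have eA : AK k (k * (h' + 1)) = k * h' + (k - 2) := by
      rw [AK, if_pos ⟨h' + 1, rfl⟩]; omega
    have eBarg : (k * (h' + 1) - 1) = k * h' + (k - 1) := by omega
    have eB : BK k (k * (h' + 1)) = k * h' + 0 := by
      rw [BK, eBarg, div_mul_add k hk (by omega : k - 1 < k)]; omega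
    rw [gg_pred_dvd k hk ⟨h' + 1, rfl⟩ hK, eBarg, eA, eB,
      gg_mul_add k hk (by omega : k - 1 < k), gg_mul_add k hk (by omega : k - 2 < k),
      gg_mul_add k hk (kpos k hk), Gg_succ_bot]
    have : (k - 1) = (k - 2) + 1 := by omega
    rw [this]
    ring
  · have hr : 1 ≤ K % k := by
      rcases Nat.eq_zero_or_pos (K % k) with h0 | h1
      · exact absurd (Nat.dvd_of_mod_eq_zero h0) hd
      · exact h1
    obtain ⟨h, r, hrk, hr1, hdd, rfl⟩ : ∃ h r, r < k ∧ 1 ≤ r ∧ ¬ k ∣ (k * h + r) ∧ K = k * h + r :=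
      ⟨K / k, K % k, Nat.mod_lt _ (kpos k hk), hr, by
        rw [Nat.div_add_mod]; exact hd, (Nat.div_add_mod K k).symm⟩
    have eA : AK k (k * h + r) = k * h + (r - 1) := by
      rw [AK, if_neg hdd]; omega
    have eBarg : (k * h + r - 1) = k * h + (r - 1) := by omega
    have eB : BK k (k * h + r) = k * h + 0 := by
      rw [BK, eBarg, div_mul_add k hk (by omega : r - 1 < k)]; omega
    rw [eA, eB, gg_mul_add k hk (by omega : r - 1 < k), gg_mul_add k hk hrk,
      gg_mul_add k hk (kpos k hk), Gg_succ_bot]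
    have : r = (r - 1) + 1 := by omega
    conv_rhs => rw [this]
    ring

/-- Bounds on the split keys. -/
lemma BK_le_AK (hk : 2 ≤ k) {K : ℕ} (hK : 1 ≤ K) : BK k K ≤ AK k K ∧ AK k K + 1 ≤ K := by
  by_cases hd : k ∣ K
  · obtain ⟨h, rfl⟩ := hd
    have hh : 1 ≤ h := by
      rcases Nat.eq_zero_or_pos h with h0 | h1
      · subst h0; simp at hK
      · exact h1
    have hkh : k ≤ k * h := Nat.le_mul_of_pos_right k hh
    have eA : AK k (k * h) = k * h - 2 := by rw [AK, if_pos ⟨h, rfl⟩]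
    have eBarg : (k * h - 1) = k * (h - 1) + (k - 1) := by
      have e0 : k * h = k * (h - 1) + k := by
        conv_lhs => rw [(by omega : h = h - 1 + 1)]
        ring
      omega
    have eB : BK k (k * h) = k * (h - 1) := by
      rw [BK, eBarg, div_mul_add k hk (by omega : k - 1 < k)]
    constructor
    · rw [eA, eB]
      have e0 : k * h = k * (h - 1) + k := by
        conv_lhs => rw [(by omega : h = h - 1 + 1)]
        ring
      omega
    · rw [eA]; omega
  · have hr : 1 ≤ K % k := by
      rcases Nat.eq_zero_or_pos (K % k) with h0 | h1
      · exact absurd (Nat.dvd_of_mod_eq_zero h0) hd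
      · exact h1
    have hK2 : K = k * (K / k) + K % k := (Nat.div_add_mod K k).symm
    have hrk : K % k < k := Nat.mod_lt _ (kpos k hk)
    have eA : AK k K = K - 1 := by rw [AK, if_neg hd]
    have eBarg : K - 1 = k * (K / k) + (K % k - 1) := by omega
    have eB : BK k K = k * (K / k) := by
      rw [BK, eBarg, div_mul_add k hk (by omega : K % k - 1 < k)]
    rw [eA, eB]
    omega

/-! ### List layer -/

/-- positional value of a list of keys: element at position `i` gets budget `b + i`. -/
def valB : ℕ → List ℕ → ℕ
  | _, [] => 0
  | b, x :: l => gg k x b + valB (b + 1) l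

@[simp] lemma valB_nil (b : ℕ) : valB k b [] = 0 := rfl

@[simp] lemma valB_cons (b x : ℕ) (l : List ℕ) :
    valB k b (x :: l) = gg k x b + valB k (b + 1) l := rfl

/-- ordered insertion into a (sorted) list of keys -/
def ins (x : ℕ) (l : List ℕ) : List ℕ := List.orderedInsert (· ≤ ·) x l

lemma ins_sorted {l : List ℕ} (hs : l.Pairwise (· ≤ ·)) (x : ℕ) :
    (ins x l).Pairwise (· ≤ ·) := List.Pairwise.orderedInsert x l hs

lemma ins_perm (x : ℕ) (l : List ℕ) : (ins x l).Perm (x :: l) :=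
  List.perm_orderedInsert _ x l

lemma mem_ins {x y : ℕ} {l : List ℕ} (h : y ∈ ins x l) : y = x ∨ y ∈ l := by
  have := (ins_perm x l).mem_iff.mp h
  simpa using this

lemma sorted_append_iff {l₁ l₂ : List ℕ} :
    (l₁ ++ l₂).Pairwise (· ≤ ·) ↔
      l₁.Pairwise (· ≤ ·) ∧ l₂.Pairwise (· ≤ ·) ∧ ∀ x ∈ l₁, ∀ y ∈ l₂, x ≤ y :=
  List.pairwise_append

lemma valB_append (b : ℕ) (l l' : List ℕ) :
    valB k b (l ++ l') = valB k b l + valB k (b + l.length) l' := by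
  induction l generalizing b with
  | nil => simp
  | cons x l ih =>
      simp only [List.cons_append, valB_cons, ih (b + 1), List.length_cons]
      ring_nf

lemma valB_mono_b (hk : 2 ≤ k) {b b' : ℕ} (hbb : b ≤ b') (l : List ℕ) :
    valB k b l ≤ valB k b' l := by
  induction l generalizing b b' with
  | nil => simp
  | cons x l ih =>
      simp only [valB_cons]
      exact Nat.add_le_add (gg_monoT k hk x hbb) (ih (by omega))

lemma ins_eq_append {x : ℕ} {l : List ℕ} (hs : l.Pairwise (· ≤ ·))
    (hx : ∀ y ∈ l, y ≤ x) : ins x l = l ++ [x] := by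
  refine eq_of_perm_of_sorted ((ins_perm x l).trans (List.perm_append_singleton x l).symm)
    (ins_sorted hs x) ?_
  rw [sorted_append_iff]
  exact ⟨hs, List.pairwise_singleton _ x, fun a ha y hy => by
    rw [List.mem_singleton] at hy; subst hy; exact hx a ha⟩

lemma ins_append_le {x y : ℕ} {l : List ℕ} (hs : (l ++ [y]).Pairwise (· ≤ ·))
    (hxy : x ≤ y) : ins x (l ++ [y]) = ins x l ++ [y] := by
  obtain ⟨hsl, -, hly⟩ := sorted_append_iff.mp hs
  have p1 : (ins x (l ++ [y])).Perm (x :: (l ++ [y])) := ins_perm _ _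
  have p2 : (ins x l ++ [y]).Perm (x :: l ++ [y]) := (ins_perm x l).append_right [y]
  have p3 : (x :: l ++ [y]) = x :: (l ++ [y]) := rfl
  refine eq_of_perm_of_sorted (p1.trans ?_) (ins_sorted hs x) ?_
  · rw [p3] at p2; exact p2.symm
  · rw [sorted_append_iff]
    refine ⟨ins_sorted hsl x, List.pairwise_singleton _ y, fun a ha z hz => ?_⟩
    have hzy : z = y := List.mem_singleton.mp hz
    rcases mem_ins ha with rfl | ha'
    · exact hxy.trans hzy.symm.le
    · exact (hly a ha' y (List.mem_singleton_self y)).trans hzy.symm.le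

lemma valB_zeros_prefix (hk : 2 ≤ k) (b z : ℕ) (l : List ℕ) :
    valB k b (List.replicate z 0 ++ l) = valB k (b + z) l := by
  induction z generalizing b with
  | zero => simp
  | succ z ih =>
      rw [List.replicate_succ]
      simp only [List.cons_append, valB_cons, gg_zero_key k hk, ih (b + 1)]
      ring_nf

lemma valB_all_zero (hk : 2 ≤ k) {l : List ℕ} (h : ∀ x ∈ l, x = 0) (b : ℕ) :
    valB k b l = 0 := by
  induction l generalizing b with
  | nil => simp
  | cons x l ih =>
      have hx := h x (List.mem_cons_self (a := x) (l := l))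
      subst hx
      simp only [valB_cons, gg_zero_key k hk, ih (fun y hy => h y (List.mem_cons_of_mem _ hy))]

/-- Inserting an element is at most as good as a global budget shift plus the element on top. -/
lemma lemG (hk : 2 ≤ k) (x : ℕ) :
    ∀ l : List ℕ, l.Pairwise (· ≤ ·) → ∀ b,
      valB k b (ins x l) ≤ valB k (b + 1) l + gg k x (b + l.length) := by
  intro l
  induction l using List.reverseRecOn with
  | nil => intro _ b; simp [ins, List.orderedInsert]
  | append_singleton m y ih =>
      intro hs b
      obtain ⟨hsm, -, hmy⟩ := sorted_append_iff.mp hs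
      by_cases hxy : x ≤ y
      · rw [ins_append_le hs hxy]
        simp only [valB_append, valB_cons, valB_nil, List.length_append,
          List.length_singleton]
        have hlen : (ins x m).length = m.length + 1 := (ins_perm x m).length_eq
        rw [hlen]
        have h1 := ih hsm b
        have h2 : gg k x (b + m.length) ≤ gg k x (b + 1 + m.length) :=
          gg_monoT k hk x (by omega)
        have h3 : b + (m.length + 1) = b + 1 + m.length := by omega
        rw [h3]
        omega
      · push_neg at hxy
        have hyx : ∀ z ∈ m ++ [y], z ≤ x := by
          intro z hz
          rcases List.mem_append.mp hz with hz | hz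
          · exact le_trans (hmy z hz y (List.mem_singleton_self y)) (le_of_lt hxy)
          · rw [List.mem_singleton] at hz; subst hz; exact le_of_lt hxy
        rw [ins_eq_append hs hyx]
        simp only [valB_append, valB_cons, valB_nil]
        have := valB_mono_b k hk (by omega : b ≤ b + 1) (m ++ [y])
        simp only [valB_append, valB_cons, valB_nil] at this
        omega

lemma lemU2 (hk : 2 ≤ k) (u : ℕ) :
    ∀ l : List ℕ, (∀ z ∈ l, z ≤ u) → ∀ b,
      valB k (b + 1) l + gg k u b ≤ valB k b l + gg k u (b + l.length) := by
  intro l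
  induction l with
  | nil => intro _ b; simp
  | cons x l ih =>
      intro hz b
      have hx : x ≤ u := hz x (List.mem_cons_self (a := x) (l := l))
      have hexch := g3s k hk hx b
      have ihl := ih (fun z hz' => hz z (List.mem_cons_of_mem _ hz')) (b + 1)
      simp only [valB_cons, List.length_cons]
      have : b + (l.length + 1) = b + 1 + l.length := by omega
      rw [this]
      omega

/-- budget shift is at most as good as inserting any element at the bottom-ish. -/
lemma lemU (hk : 2 ≤ k) (u : ℕ) :
    ∀ l : List ℕ, l.Pairwise (· ≤ ·) → ∀ b,
      valB k (b + 1) l ≤ valB k b (ins u l) := by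
  intro l
  induction l using List.reverseRecOn with
  | nil => intro _ b; simp [ins, List.orderedInsert]
  | append_singleton m y ih =>
      intro hs b
      obtain ⟨hsm, -, hmy⟩ := sorted_append_iff.mp hs
      by_cases huy : u ≤ y
      · rw [ins_append_le hs huy]
        simp only [valB_append, valB_cons, valB_nil, List.length_append,
          List.length_singleton]
        have hlen : (ins u m).length = m.length + 1 := (ins_perm u m).length_eq
        rw [hlen]
        have h1 := ih hsm b
        have h3 : b + (m.length + 1) = b + 1 + m.length := by omega
        rw [h3]
        omega
      · push_neg at huy
        have hyx : ∀ z ∈ m ++ [y], z ≤ u := by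
          intro z hz
          rcases List.mem_append.mp hz with hz | hz
          · exact le_trans (hmy z hz y (List.mem_singleton_self y)) (le_of_lt huy)
          · rw [List.mem_singleton] at hz; subst hz; exact le_of_lt huy
        rw [ins_eq_append hs hyx]
        have h2 := lemU2 k hk u (m ++ [y]) hyx b
        simp only [valB_append, valB_cons, valB_nil] at *
        omega

/-- Main upper-bound inequality at the list level. -/
lemma lemC (hk : 2 ≤ k) {K : ℕ} (hK : 1 ≤ K) :
    ∀ l : List ℕ, l.Pairwise (· ≤ ·) → ∀ b,
      valB k b (ins (AK k K) (ins (BK k K) l)) + 1 ≤ valB k (b + 1) (ins K l) := by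
  obtain ⟨hBA, hAK⟩ := BK_le_AK k hk hK
  intro l
  induction l using List.reverseRecOn with
  | nil =>
      intro _ b
      have e1 : ins (BK k K) ([] : List ℕ) = [BK k K] := rfl
      have e2 : ins (AK k K) [BK k K] = [BK k K] ++ [AK k K] :=
        ins_eq_append (List.pairwise_singleton _ _)
          (fun y hy => by rw [List.mem_singleton] at hy; subst hy; exact hBA)
      rw [e1, e2]
      have eK : ins K ([] : List ℕ) = [K] := rfl
      rw [eK]
      simp only [valB_append, valB_cons, valB_nil, List.length_singleton]
      have := ID1 k hk hK b
      omega
  | append_singleton m y ih =>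
      intro hs b
      obtain ⟨hsm, -, hmy⟩ := sorted_append_iff.mp hs
      have hmy' : ∀ z ∈ m, z ≤ y := fun z hz => hmy z hz y (List.mem_singleton_self y)
      by_cases hKy : K ≤ y
      · have hAy : AK k K ≤ y := by omega
        have hBy : BK k K ≤ y := by omega
        rw [ins_append_le hs hBy]
        have hsBm : (ins (BK k K) m ++ [y]).Pairwise (· ≤ ·) := by
          rw [sorted_append_iff]
          refine ⟨ins_sorted hsm _, List.pairwise_singleton _ y, fun z hz w hw => ?_⟩
          rw [List.mem_singleton] at hw; subst hw
          rcases mem_ins hz with rfl | hz'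
          · exact hBy
          · exact hmy' z hz'
        rw [ins_append_le hsBm hAy, ins_append_le hs hKy]
        simp only [valB_append, valB_cons, valB_nil]
        have hlen2 : (ins (AK k K) (ins (BK k K) m)).length = m.length + 2 := by
          rw [(ins_perm _ _).length_eq, List.length_cons, (ins_perm _ _).length_eq,
            List.length_cons]
        have hlenK : (ins K m).length = m.length + 1 := (ins_perm _ _).length_eq
        rw [hlen2, hlenK]
        have hih := ih hsm b
        have h3 : b + (m.length + 2) = b + 1 + (m.length + 1) := by omega
        rw [h3]
        omega
      · push_neg at hKy
        have hallK : ∀ z ∈ m ++ [y], z ≤ K := by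
          intro z hz
          rcases List.mem_append.mp hz with hz | hz
          · exact (hmy' z hz).trans hKy.le
          · rw [List.mem_singleton] at hz; subst hz; exact hKy.le
        have hinsK : ins K (m ++ [y]) = (m ++ [y]) ++ [K] := ins_eq_append hs hallK
        by_cases hyA : y ≤ AK k K
        · have hall : ∀ z ∈ ins (BK k K) (m ++ [y]), z ≤ AK k K := by
            intro z hz
            rcases mem_ins hz with rfl | hz'
            · exact hBA
            · rcases List.mem_append.mp hz' with hz'' | hz''
              · exact (hmy' z hz'').trans hyA
              · rw [List.mem_singleton] at hz''; subst hz''; exact hyA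
          rw [ins_eq_append (ins_sorted hs _) hall, hinsK]
          simp only [valB_append, valB_cons, valB_nil, List.length_append,
            List.length_singleton]
          have hlenB : (ins (BK k K) (m ++ [y])).length = m.length + 1 + 1 := by
            rw [(ins_perm _ _).length_eq, List.length_cons, List.length_append,
              List.length_singleton]
          rw [hlenB]
          have hG := lemG k hk (BK k K) (m ++ [y]) hs b
          simp only [List.length_append, List.length_singleton] at hG
          have hID := ID1 k hk hK (b + (m.length + 1))
          have hexp : valB k (b + 1) (m ++ [y])
              = valB k (b + 1) m + gg k y (b + 1 + m.length) := by
            simp only [valB_append, valB_cons, valB_nil]; omega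
          rw [hexp] at hG
          have e1 : b + (m.length + 1 + 1) = b + (m.length + 1) + 1 := by omega
          have e2 : b + 1 + (m.length + 1) = b + (m.length + 1) + 1 := by omega
          rw [e1, e2]
          omega
        · push_neg at hyA
          have hBy : BK k K ≤ y := hBA.trans hyA.le
          rw [ins_append_le hs hBy]
          have hsBm : (ins (BK k K) m ++ [y]).Pairwise (· ≤ ·) := by
            rw [sorted_append_iff]
            refine ⟨ins_sorted hsm _, List.pairwise_singleton _ y, fun z hz w hw => ?_⟩
            rw [List.mem_singleton] at hw; subst hw
            rcases mem_ins hz with rfl | hz'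
            · exact hBy
            · exact hmy' z hz'
          rw [ins_append_le hsBm hyA.le, hinsK]
          simp only [valB_append, valB_cons, valB_nil, List.length_append,
            List.length_singleton]
          have hlen2 : (ins (AK k K) (ins (BK k K) m)).length = m.length + 2 := by
            rw [(ins_perm _ _).length_eq, List.length_cons, (ins_perm _ _).length_eq,
              List.length_cons]
          rw [hlen2]
          have hih := ih hsm b
          have hinsKm : ins K m = m ++ [K] :=
            ins_eq_append hsm (fun z hz => (hmy' z hz).trans hKy.le)
          rw [hinsKm] at hih
          simp only [valB_append, valB_cons, valB_nil] at hih
          have hexch := g3s k hk hKy.le (b + m.length + 1)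
          have e1 : b + (m.length + 2) = b + m.length + 1 + 1 := by omega
          have e2 : b + 1 + (m.length + 1) = b + m.length + 1 + 1 := by omega
          have e3 : b + 1 + m.length = b + m.length + 1 := by omega
          rw [e1, e2, e3]
          rw [e3] at hih
          omega

/-! ### Multiset layer -/

/-- potential of a multiset of keys -/
def valM (S : Multiset ℕ) : ℕ := valB k 0 (S.sort (· ≤ ·))

lemma sort_coe_sorted {l : List ℕ} (hs : l.Pairwise (· ≤ ·)) :
    (l : Multiset ℕ).sort (· ≤ ·) = l := by
  refine eq_of_perm_of_sorted ?_ (Multiset.pairwise_sort _ _) hs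
  rw [← Multiset.coe_eq_coe, Multiset.sort_eq]

lemma valM_coe_sorted {l : List ℕ} (hs : l.Pairwise (· ≤ ·)) :
    valM k (l : Multiset ℕ) = valB k 0 l := by
  rw [valM, sort_coe_sorted hs]

lemma sort_cons (x : ℕ) (S : Multiset ℕ) :
    (x ::ₘ S).sort (· ≤ ·) = ins x (S.sort (· ≤ ·)) := by
  refine eq_of_perm_of_sorted ?_ (Multiset.pairwise_sort _ _)
    (ins_sorted (Multiset.pairwise_sort _ _) x)
  rw [← Multiset.coe_eq_coe]
  have h1 : ((x ::ₘ S).sort (· ≤ ·) : Multiset ℕ) = x ::ₘ S := Multiset.sort_eq _ _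
  have h2 : ((ins x (S.sort (· ≤ ·)) : List ℕ) : Multiset ℕ) = x ::ₘ S := by
    have hp : (ins x (S.sort (· ≤ ·))).Perm (x :: S.sort (· ≤ ·)) := ins_perm _ _
    rw [Multiset.coe_eq_coe.mpr hp, ← Multiset.cons_coe, Multiset.sort_eq]
  rw [h1, h2]

lemma valM_cons (x : ℕ) (S : Multiset ℕ) :
    valM k (x ::ₘ S) = valB k 0 (ins x (S.sort (· ≤ ·))) := by
  rw [valM, sort_cons]

/-- The upper-bound step inequality at multiset level. -/
lemma UBstep (hk : 2 ≤ k) {K : ℕ} (hK : 1 ≤ K) (u : ℕ) (S : Multiset ℕ) :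
    valM k (AK k K ::ₘ BK k K ::ₘ S) + 1 ≤ valM k (u ::ₘ K ::ₘ S) := by
  rw [valM_cons, sort_cons, valM_cons, sort_cons]
  have hsort : (S.sort (· ≤ ·)).Pairwise (· ≤ ·) := Multiset.pairwise_sort _ _
  calc valB k 0 (ins (AK k K) (ins (BK k K) (S.sort (· ≤ ·)))) + 1
      ≤ valB k (0 + 1) (ins K (S.sort (· ≤ ·))) := lemC k hk hK _ hsort 0
    _ ≤ valB k 0 (ins u (ins K (S.sort (· ≤ ·)))) := lemU k hk u _ (ins_sorted hsort K) 0

/-! ### Tree layer -/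

/-- The tree encoded by key `K`. -/
def toTree (K : ℕ) : RTree := ACT (K % k + 1) k (K / k)

lemma toTree_zero (hk : 2 ≤ k) : toTree k 0 = RTree.node [] := by
  rw [toTree, Nat.zero_mod, Nat.zero_div, ACT, if_pos rfl]
  rfl

lemma toTree_mul_add (hk : 2 ≤ k) {h r : ℕ} (hr : r < k) :
    toTree k (k * h + r) = ACT (r + 1) k h := by
  rw [toTree, div_mul_add k hk hr, mod_mul_add k hk hr]

/-- Structure of the tree with key `K ≥ 1`, and of the split keys. -/
lemma key_struct (hk : 2 ≤ k) {K : ℕ} (hK : 1 ≤ K) :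
    ∃ j H, toTree k K = RTree.node (List.replicate (j + 2) (CKT k H)) ∧
      toTree k (AK k K) = ACT (j + 1) k H ∧ toTree k (BK k K) = CKT k H := by
  by_cases hd : k ∣ K
  · obtain ⟨h, rfl⟩ := hd
    have hh : 1 ≤ h := by
      rcases Nat.eq_zero_or_pos h with h0 | h1
      · subst h0; simp at hK
      · exact h1
    obtain ⟨h', rfl⟩ : ∃ h', h = h' + 1 := ⟨h - 1, by omega⟩
    refine ⟨k - 2, h', ?_, ?_, ?_⟩
    · have e0 : k * (h' + 1) = k * (h' + 1) + 0 := by omega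
      rw [e0, toTree_mul_add k hk (kpos k hk)]
      rw [ACT, if_pos rfl]
      have ek : k - 2 + 2 = k := by omega
      rw [ek, CKT]
    · have eA : AK k (k * (h' + 1)) = k * h' + (k - 2) := by
        rw [AK, if_pos ⟨h' + 1, rfl⟩]
        have : k * (h' + 1) = k * h' + k := by ring
        omega
      rw [eA, toTree_mul_add k hk (by omega : k - 2 < k)]
    · have eBarg : (k * (h' + 1) - 1) = k * h' + (k - 1) := by
        have : k * (h' + 1) = k * h' + k := by ring
        omega
      have eB : BK k (k * (h' + 1)) = k * h' + 0 := by
        rw [BK, eBarg, div_mul_add k hk (by omega : k - 1 < k)]; omega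
      rw [eB, toTree_mul_add k hk (kpos k hk), ACT, if_pos rfl]
  · have hr : 1 ≤ K % k := by
      rcases Nat.eq_zero_or_pos (K % k) with h0 | h1
      · exact absurd (Nat.dvd_of_mod_eq_zero h0) hd
      · exact h1
    obtain ⟨h, r, hrk, hr1, hdd, rfl⟩ : ∃ h r, r < k ∧ 1 ≤ r ∧ ¬ k ∣ (k * h + r) ∧ K = k * h + r :=
      ⟨K / k, K % k, Nat.mod_lt _ (kpos k hk), hr, by
        rw [Nat.div_add_mod]; exact hd, (Nat.div_add_mod K k).symm⟩
    refine ⟨r - 1, h, ?_, ?_, ?_⟩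
    · rw [toTree_mul_add k hk hrk, ACT, if_neg (show ¬(r + 1 = 1) by omega)]
      congr 2
      omega
    · have eA : AK k (k * h + r) = k * h + (r - 1) := by
        rw [AK, if_neg hdd]; omega
      rw [eA, toTree_mul_add k hk (by omega : r - 1 < k)]
    · have eBarg : (k * h + r - 1) = k * h + (r - 1) := by omega
      have eB : BK k (k * h + r) = k * h + 0 := by
        rw [BK, eBarg, div_mul_add k hk (by omega : r - 1 < k)]; omega
      rw [eB, toTree_mul_add k hk (kpos k hk), ACT, if_pos rfl]

lemma replicate_decomp {α : Type} {cs : List α} {c x : α} {n : ℕ}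
    (h : cs ++ [c] = List.replicate n x) :
    c = x ∧ cs = List.replicate (n - 1) x ∧ n = cs.length + 1 := by
  have hlen : cs.length + 1 = n := by
    have := congrArg List.length h
    simpa using this
  obtain ⟨n', rfl⟩ : ∃ n', n = n' + 1 := ⟨cs.length, hlen.symm⟩
  rw [List.replicate_succ'] at h
  have hl : cs.length = (List.replicate n' x).length := by
    rw [List.length_replicate]; omega
  obtain ⟨h1, h2⟩ := List.append_inj h hl
  refine ⟨?_, ?_, by omega⟩
  · simpa using h2
  · simpa using h1

lemma map_decomp {L : Multiset ℕ} {U : RTree} {T : Multiset RTree}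
    (h : L.map (toTree k) = U ::ₘ T) :
    ∃ u L', L = u ::ₘ L' ∧ toTree k u = U ∧ L'.map (toTree k) = T := by
  have hU : U ∈ L.map (toTree k) := by rw [h]; exact Multiset.mem_cons_self U T
  obtain ⟨u, hu, hfu⟩ := Multiset.mem_map.mp hU
  refine ⟨u, L.erase u, (Multiset.cons_erase hu).symm, hfu, ?_⟩
  have h2 : (u ::ₘ L.erase u).map (toTree k) = U ::ₘ T := by
    rw [Multiset.cons_erase hu, h]
  rw [Multiset.map_cons, hfu] at h2
  exact (Multiset.cons_inj_right U).mp h2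

/-! ### Main upper bound -/

lemma UB (hk : 2 ≤ k) : ∀ m : ℕ, ∀ L : Multiset ℕ,
    RStealSeq m (L.map (toTree k)) → m ≤ valM k L := by
  intro m
  induction m with
  | zero => intro L _; exact Nat.zero_le _
  | succ m ih =>
      intro L hseq
      obtain ⟨S', hstep, hseq'⟩ := hseq
      obtain ⟨U, c, cs, S₀, hS, hbr⟩ := hstep
      obtain ⟨u, L₁, rfl, hu, hmap1⟩ := map_decomp k hS
      obtain ⟨K, L₀, rfl, hT, hmap0⟩ := map_decomp k hmap1
      have hK : 1 ≤ K := by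
        rcases Nat.eq_zero_or_pos K with h0 | h1
        · subst h0
          rw [toTree_zero k hk] at hT
          have : ([] : List RTree) = cs ++ [c] := by
            injection hT
          simp at this
        · exact h1
      obtain ⟨j, H, hstruct, hA, hB⟩ := key_struct k hk hK
      have hceq : cs ++ [c] = List.replicate (j + 2) (CKT k H) := by
        have h2 := hT.symm.trans hstruct
        injection h2
      obtain ⟨hc, hcs, hn⟩ := replicate_decomp hceq
      have hS' : S' = (AK k K ::ₘ BK k K ::ₘ L₀).map (toTree k) := by
        rw [Multiset.map_cons, Multiset.map_cons, hmap0, hA, hB]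
        rcases hbr with ⟨a, hcs1, rfl⟩ | ⟨hlen, rfl⟩
        · have hl1 : cs.length = 1 := by rw [hcs1]; rfl
          have hj : j = 0 := by omega
          subst hj
          have ha : a = CKT k H := by
            rw [hcs1] at hcs
            simpa using hcs
          rw [ha, hc, ACT, if_pos rfl]
        · have hj : 1 ≤ j := by omega
          rw [hcs, hc, ACT, if_neg (show ¬(j + 1 = 1) by omega)]
          have : j + 2 - 1 = j + 1 := by omega
          rw [this]
      rw [hS'] at hseq'
      have hih := ih _ hseq'
      have hub := UBstep k hk hK u L₀
      omega

/-! ### Main lower bound -/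

lemma sorted_rep0 (z : ℕ) : (List.replicate z (0 : ℕ)).Pairwise (· ≤ ·) := by
  induction z with
  | zero => simp
  | succ z ih =>
      rw [List.replicate_succ, List.pairwise_cons]
      exact ⟨fun y hy => by have := List.eq_of_mem_replicate hy; omega, ih⟩

lemma sorted_split : ∀ l : List ℕ, l.Pairwise (· ≤ ·) →
    (∀ x ∈ l, x = 0) ∨
      ∃ z K r, 1 ≤ K ∧ l = List.replicate z 0 ++ K :: r ∧ (K :: r).Pairwise (· ≤ ·) := by
  intro l
  induction l with
  | nil => exact fun _ => Or.inl (by simp)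
  | cons x l ih =>
      intro hs
      rcases Nat.eq_zero_or_pos x with h0 | h1
      · subst h0
        rcases ih hs.of_cons with hz | ⟨z, K, r, hK, heq, hsK⟩
        · left
          intro y hy
          rcases List.mem_cons.mp hy with rfl | hy'
          · rfl
          · exact hz y hy'
        · right
          exact ⟨z + 1, K, r, hK, by rw [List.replicate_succ, List.cons_append, heq], hsK⟩
      · right
        exact ⟨0, x, l, h1, rfl, hs⟩

lemma coe_two_middle (z : ℕ) (r : List ℕ) (a b : ℕ) :
    ((List.replicate z 0 ++ a :: b :: r : List ℕ) : Multiset ℕ).map (toTree k)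
      = toTree k a ::ₘ toTree k b ::ₘ
          ((List.replicate z 0 ++ r : List ℕ) : Multiset ℕ).map (toTree k) := by
  rw [Multiset.map_coe, Multiset.map_coe, Multiset.cons_coe, Multiset.cons_coe,
    Multiset.coe_eq_coe]
  simp only [List.map_append, List.map_cons]
  exact List.perm_middle.trans (List.Perm.cons _ List.perm_middle)

lemma coe_one_middle (z : ℕ) (r : List ℕ) (a : ℕ) :
    ((List.replicate z 0 ++ a :: r : List ℕ) : Multiset ℕ).map (toTree k)
      = toTree k a ::ₘ
          ((List.replicate z 0 ++ r : List ℕ) : Multiset ℕ).map (toTree k) := by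
  rw [Multiset.map_coe, Multiset.map_coe, Multiset.cons_coe, Multiset.coe_eq_coe]
  simp only [List.map_append, List.map_cons]
  exact List.perm_middle

lemma LB (hk : 2 ≤ k) : ∀ n : ℕ, ∀ l : List ℕ, l.Pairwise (· ≤ ·) → valB k 0 l = n →
    RStealSeq n ((l : Multiset ℕ).map (toTree k)) := by
  intro n
  induction n with
  | zero => intro l _ _; trivial
  | succ n ih =>
      intro l hs hval
      match l with
      | [] => simp at hval
      | u :: l' =>
        rcases sorted_split l' hs.of_cons with hz | ⟨z, K, r, hK, heq, hsKr⟩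
        · exfalso
          have h0 : valB k (0 + 1) l' = 0 := valB_all_zero k hk hz (0 + 1)
          simp only [valB_cons, gg_zero_t] at hval
          omega
        · subst heq
          obtain ⟨hKr, hsr⟩ := List.pairwise_cons.mp hsKr
          obtain ⟨hBA, hAK⟩ := BK_le_AK k hk hK
          set l2 : List ℕ := List.replicate z 0 ++ BK k K :: AK k K :: r with hl2
          have hs2 : l2.Pairwise (· ≤ ·) := by
            rw [hl2, sorted_append_iff]
            refine ⟨sorted_rep0 z, ?_, ?_⟩
            · rw [List.pairwise_cons]
              refine ⟨?_, ?_⟩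
              · intro y hy
                rcases List.mem_cons.mp hy with rfl | hy'
                · exact hBA
                · exact le_trans (le_trans hBA (by omega)) (hKr y hy')
              · rw [List.pairwise_cons]
                exact ⟨fun y hy => le_trans (by omega) (hKr y hy), hsr⟩
            · intro x hx y hy
              have := List.eq_of_mem_replicate hx
              omega
          have hv2 : valB k 0 l2 = n := by
            rw [hl2, valB_zeros_prefix k hk]
            simp only [valB_cons]
            have hid := ID1 k hk hK z
            simp only [valB_cons, gg_zero_t] at hval
            rw [valB_zeros_prefix k hk] at hval
            simp only [valB_cons] at hval
            have e3 : 0 + z = z := by omega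
            rw [e3]
            have f1 : 0 + 1 + z = z + 1 := by omega
            rw [f1] at hval
            omega
          obtain ⟨j, H, hstruct, hA, hB⟩ := key_struct k hk hK
          refine ⟨((l2 : List ℕ) : Multiset ℕ).map (toTree k), ?_, ih l2 hs2 hv2⟩
          refine ⟨toTree k u, CKT k H, List.replicate (j + 1) (CKT k H),
            ((List.replicate z 0 ++ r : List ℕ) : Multiset ℕ).map (toTree k), ?_, ?_⟩
          · rw [← List.replicate_succ', ← hstruct]
            rw [← Multiset.cons_coe, Multiset.map_cons, coe_one_middle]
          · rw [hl2, coe_two_middle, Multiset.cons_swap, hA, hB]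
            match j with
            | 0 =>
              left
              refine ⟨CKT k H, rfl, ?_⟩
              rw [ACT, if_pos rfl]
            | j' + 1 =>
              right
              constructor
              · simp
              · rw [ACT, if_neg (show ¬(j' + 1 + 1 = 1) by omega)]

/-! ### The value of `stealsR` -/

lemma stealsR_eq (hk : 2 ≤ k) {l : List ℕ} (hs : l.Pairwise (· ≤ ·)) :
    stealsR ((l : Multiset ℕ).map (toTree k)) = valB k 0 l := by
  have hub : ∀ m ∈ {n | RStealSeq n ((l : Multiset ℕ).map (toTree k))}, m ≤ valB k 0 l := by
    intro m hm
    have := UB k hk m (l : Multiset ℕ) hm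
    rwa [valM_coe_sorted k hs] at this
  apply le_antisymm
  · exact csSup_le ⟨0, trivial⟩ hub
  · exact le_csSup ⟨valB k 0 l, hub⟩ (LB k hk (valB k 0 l) l hs rfl)

end WS

theorem potential_ACT (k h b n : ℕ) (hk : 2 ≤ k) (hb1 : 1 ≤ b) (hb : b ≤ k - 1) :
    PhiR (ACT b k h) n =
      (∑ i ∈ Finset.Icc 1 n, (k - 1) ^ i * Nat.choose h i) +
        (b - 1) * ∑ i ∈ Finset.range n, (k - 1) ^ i * Nat.choose h i := by
  have hb1k : b - 1 < k := by omega
  have htree : WS.toTree k (k * h + (b - 1)) = ACT b k h := by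
    rw [WS.toTree_mul_add k hk hb1k]
    congr 1
    omega
  have hsorted : (List.replicate n 0 ++ [k * h + (b - 1)]).Pairwise (· ≤ ·) := by
    rw [WS.sorted_append_iff]
    refine ⟨WS.sorted_rep0 n, List.pairwise_singleton _ _, fun x hx y hy => ?_⟩
    have := List.eq_of_mem_replicate hx
    omega
  have hlist : ((List.replicate n 0 ++ [k * h + (b - 1)] : List ℕ) : Multiset ℕ).map (WS.toTree k)
      = ACT b k h ::ₘ Multiset.replicate n (RTree.node []) := by
    rw [Multiset.map_coe, List.map_append, List.map_replicate, WS.toTree_zero k hk]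
    simp only [List.map_cons, List.map_nil]
    rw [htree]
    rw [← Multiset.coe_replicate, Multiset.cons_coe]
    exact Multiset.coe_eq_coe.mpr (List.perm_append_singleton _ _)
  have hval := WS.stealsR_eq k hk hsorted
  rw [hlist] at hval
  show stealsR (ACT b k h ::ₘ Multiset.replicate n (RTree.node [])) = _
  rw [hval, WS.valB_zeros_prefix k hk, Nat.zero_add]
  show WS.gg k (k * h + (b - 1)) n + WS.valB k (n + 1) [] = _
  rw [WS.valB_nil, WS.gg_mul_add k hk hb1k, Nat.add_zero]
  rfl
end

section
/- For all integers k ≥ 2, j ≥ 1, b ≥ 1, and 1 ≤ b' ≤ k−1, if h > h' ≥ 0 then g(b', h', j) ≤ g(b, h, j). -/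
/-- For fixed `k`, `g k b h j = (k−1)^j · C(h, j) + (b−1) · (k−1)^{j−1} · C(h, j−1)`. -/
def g (k b h j : ℕ) : ℕ :=
  (k - 1) ^ j * Nat.choose h j + (b - 1) * ((k - 1) ^ (j - 1) * Nat.choose h (j - 1))

theorem g_mono (k j b b' h h' : ℕ) (hk : 2 ≤ k) (hj : 1 ≤ j) (hb : 1 ≤ b) (hb'1 : 1 ≤ b')
    (hb' : b' ≤ k - 1) (hh : h' < h) :
    g k b' h' j ≤ g k b h j := by
  unfold g
  have key : g k b' h' j ≤ (k - 1) ^ j * Nat.choose (h' + 1) j := by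
    unfold g
    have hj' : j - 1 + 1 = j := Nat.succ_pred_eq_of_pos hj
    have pascal : Nat.choose (h' + 1) j = Nat.choose h' j + Nat.choose h' (j - 1) := by
      rw [← hj', Nat.choose_succ_succ', hj', Nat.add_comm]
    rw [pascal, Nat.mul_add]
    have h2 : (b' - 1) * ((k - 1) ^ (j - 1) * Nat.choose h' (j - 1)) ≤
        (k - 1) ^ j * Nat.choose h' (j - 1) := by
      have : (b' - 1) * (k - 1) ^ (j - 1) ≤ (k - 1) ^ j := by
        calc (b' - 1) * (k - 1) ^ (j - 1) ≤ (k - 1) * (k - 1) ^ (j - 1) :=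
              Nat.mul_le_mul_right _ (le_trans (Nat.sub_le _ _) hb')
          _ = (k - 1) ^ j := by rw [← pow_succ']; rw [hj']
      calc (b' - 1) * ((k - 1) ^ (j - 1) * Nat.choose h' (j - 1))
          = (b' - 1) * (k - 1) ^ (j - 1) * Nat.choose h' (j - 1) := by ring
        _ ≤ (k - 1) ^ j * Nat.choose h' (j - 1) := Nat.mul_le_mul_right _ this
    omega
  calc g k b' h' j ≤ (k - 1) ^ j * Nat.choose (h' + 1) j := key
    _ ≤ (k - 1) ^ j * Nat.choose h j :=
        Nat.mul_le_mul_left _ (Nat.choose_le_choose _ hh)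
    _ ≤ _ := Nat.le_add_right _ _
end

section
/- Let k ≥ 2, P ≥ 1, and for 1 ≤ i ≤ P let h_i ≥ 0 and 1 ≤ b_i ≤ k−1 with sizes sorted increasingly: b_1·k^{h_1} ≤ b_2·k^{h_2} ≤ ⋯ ≤ b_P·k^{h_P}. Then for every permutation σ of {1, …, P}, ∑_{i=1}^{P} f(b_{σ(i)}, h_{σ(i)}, i−1) ≤ ∑_{i=1}^{P} f(b_i, h_i, i−1); that is, the maximum over permutations of the total potential is attained by assigning the trees in increasing order of size. -/
/-- For fixed `k`, `f k b h n = ∑_{i=1}^{n} (k−1)^i · C(h, i) + (b−1) · ∑_{i=0}^{n−1} (k−1)^i · C(h, i)`. -/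
def f (k b h n : ℕ) : ℕ :=
  (∑ i ∈ Finset.Icc 1 n, (k - 1) ^ i * Nat.choose h i) +
    (b - 1) * ∑ i ∈ Finset.range n, (k - 1) ^ i * Nat.choose h i

/-- Per-step increment of `f`. -/
def Δ (k b h j : ℕ) : ℕ :=
  (k - 1) ^ (j + 1) * Nat.choose h (j + 1) + (b - 1) * ((k - 1) ^ j * Nat.choose h j)

lemma f_eq (k b h n : ℕ) : f k b h n = ∑ j ∈ Finset.range n, Δ k b h j := by
  induction n with
  | zero => simp [f]
  | succ n ih =>
      rw [Finset.sum_range_succ, ← ih, f, f, Finset.sum_Icc_succ_top (by omega),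
        Finset.sum_range_succ, mul_add, Δ]
      ring

lemma delta_mono {k : ℕ} (hk : 2 ≤ k) {b h b' h' : ℕ} (hb : 1 ≤ b) (hbk : b ≤ k - 1)
    (hb' : 1 ≤ b') (hbk' : b' ≤ k - 1) (hle : b * k ^ h ≤ b' * k ^ h') (j : ℕ) :
    Δ k b h j ≤ Δ k b' h' j := by
  have hkpos : 0 < k := by omega
  have hhh : h ≤ h' := by
    by_contra hcon
    push_neg at hcon
    have h1 : b' * k ^ h' < k ^ (h' + 1) := by
      have : b' * k ^ h' < k * k ^ h' := by
        apply Nat.mul_lt_mul_of_lt_of_le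
        · omega
        · exact le_rfl
        · positivity
      calc b' * k ^ h' < k * k ^ h' := this
        _ = k ^ (h' + 1) := by ring
    have h2 : k ^ (h' + 1) ≤ k ^ h := Nat.pow_le_pow_right hkpos (by omega)
    have h3 : k ^ h ≤ b * k ^ h := Nat.le_mul_of_pos_left _ (by omega)
    omega
  rcases Nat.eq_or_lt_of_le hhh with heq | hlt
  · subst heq
    have hbb : b ≤ b' := by
      have := Nat.le_of_mul_le_mul_right hle (by positivity : 0 < k ^ h)
      exact this
    unfold Δ
    exact Nat.add_le_add le_rfl (Nat.mul_le_mul_right _ (by omega))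
  · unfold Δ
    have key : (k - 1) ^ (j + 1) * Nat.choose h (j + 1) +
        (b - 1) * ((k - 1) ^ j * Nat.choose h j) ≤
        (k - 1) ^ (j + 1) * Nat.choose h' (j + 1) :=
      calc (k - 1) ^ (j + 1) * Nat.choose h (j + 1) +
          (b - 1) * ((k - 1) ^ j * Nat.choose h j)
          ≤ (k - 1) ^ (j + 1) * Nat.choose h (j + 1) +
            (k - 1) * ((k - 1) ^ j * Nat.choose h j) :=
            Nat.add_le_add le_rfl (Nat.mul_le_mul_right _ (by omega))
        _ = (k - 1) ^ (j + 1) * Nat.choose (h + 1) (j + 1) := by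
            rw [Nat.choose_succ_succ h j]; ring
        _ ≤ (k - 1) ^ (j + 1) * Nat.choose h' (j + 1) :=
            Nat.mul_le_mul_left _ (Nat.choose_le_choose _ hlt)
    calc (k - 1) ^ (j + 1) * Nat.choose h (j + 1) +
        (b - 1) * ((k - 1) ^ j * Nat.choose h j)
        ≤ (k - 1) ^ (j + 1) * Nat.choose h' (j + 1) := key
      _ ≤ _ := Nat.le_add_right _ _

lemma sum_le_sum_top {P t c : ℕ} (hc : c + t = P) (g : Fin P → ℕ) (mono : Monotone g)
    (S : Finset (Fin P)) (hS : S.card = t) :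
    ∑ i ∈ S, g i ≤ ∑ m : Fin t, g ⟨c + m.val, by omega⟩ := by
  have key : ∀ m : Fin t, ((S.orderEmbOfFin hS) m).val ≤ c + m.val := by
    intro m
    set x : Fin P := S.orderEmbOfFin hS m with hx
    have hsub : (Finset.Ici m).image (S.orderEmbOfFin hS) ⊆ Finset.Ici x := by
      intro y hy
      rw [Finset.mem_image] at hy
      obtain ⟨m', hm', rfl⟩ := hy
      rw [Finset.mem_Ici] at hm' ⊢
      exact (S.orderEmbOfFin hS).monotone hm'
    have hcardim : ((Finset.Ici m).image (S.orderEmbOfFin hS)).card = t - m.val := by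
      rw [Finset.card_image_of_injective _ (S.orderEmbOfFin hS).injective, Fin.card_Ici]
    have h2 : (Finset.Ici x).card = P - x.val := Fin.card_Ici x
    have h3 := Finset.card_le_card hsub
    rw [hcardim, h2] at h3
    have hm := m.isLt
    have hxlt := x.isLt
    omega
  have hSim : S = Finset.univ.image (S.orderEmbOfFin hS) := by
    ext x
    have := Finset.range_orderEmbOfFin S hS
    constructor
    · intro hx
      have : x ∈ Set.range (S.orderEmbOfFin hS) := by rw [this]; exact hx
      obtain ⟨m, hm⟩ := this
      exact Finset.mem_image.mpr ⟨m, Finset.mem_univ m, hm⟩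
    · intro hx
      obtain ⟨m, _, rfl⟩ := Finset.mem_image.mp hx
      exact Finset.orderEmbOfFin_mem S hS m
  have h4 : ∑ x ∈ Finset.univ.image (S.orderEmbOfFin hS), g x =
      ∑ m : Fin t, g ((S.orderEmbOfFin hS) m) :=
    Finset.sum_image (fun a _ a' _ haa => (S.orderEmbOfFin hS).injective haa)
  rw [← hSim] at h4
  rw [h4]
  apply Finset.sum_le_sum
  intro m _
  exact mono (by exact_mod_cast key m : (S.orderEmbOfFin hS) m ≤ ⟨c + m.val, by omega⟩)

theorem sorted_assignment_maximal (k P : ℕ) (hk : 2 ≤ k) (hP : 1 ≤ P)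
    (h b : Fin P → ℕ) (hb1 : ∀ i, 1 ≤ b i) (hbk : ∀ i, b i ≤ k - 1)
    (hsorted : ∀ i j : Fin P, i ≤ j → b i * k ^ h i ≤ b j * k ^ h j)
    (σ : Equiv.Perm (Fin P)) :
    ∑ i : Fin P, f k (b (σ i)) (h (σ i)) i.val ≤ ∑ i : Fin P, f k (b i) (h i) i.val := by
  -- decompose f into increments
  simp only [f_eq]
  -- swap order of summation
  have swap : ∀ G : Fin P → ℕ → ℕ,
      ∑ i : Fin P, ∑ j ∈ Finset.range i.val, G i j =
      ∑ j ∈ Finset.range P, ∑ i ∈ Finset.univ.filter (fun i : Fin P => j < i.val), G i j := by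
    intro G
    have step : ∀ i : Fin P, ∑ j ∈ Finset.range i.val, G i j =
        ∑ j ∈ Finset.range P, if j < i.val then G i j else 0 := by
      intro i
      rw [← Finset.sum_filter]
      congr 1
      ext j
      simp only [Finset.mem_filter, Finset.mem_range]
      have := i.isLt
      omega
    simp_rw [step]
    rw [Finset.sum_comm]
    exact Finset.sum_congr rfl fun j _ => (Finset.sum_filter _ _).symm
  rw [swap (fun i j => Δ k (b (σ i)) (h (σ i)) j), swap (fun i j => Δ k (b i) (h i) j)]
  apply Finset.sum_le_sum
  intro j hj
  rw [Finset.mem_range] at hj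
  set T : Finset (Fin P) := Finset.univ.filter (fun i : Fin P => j < i.val) with hT
  -- T is the image of the top embedding
  let e : Fin (P - (j + 1)) ↪ Fin P :=
    ⟨fun m => ⟨j + 1 + m.val, by omega⟩, fun a a' haa => by
      have hv : j + 1 + a.val = j + 1 + a'.val := congrArg Fin.val haa
      exact Fin.ext (by omega)⟩
  have hTmap : T = Finset.univ.map e := by
    ext x
    simp only [hT, Finset.mem_filter, Finset.mem_univ, true_and, Finset.mem_map,
      Function.Embedding.coeFn_mk, e]
    constructor
    · intro hx
      refine ⟨⟨x.val - (j + 1), by omega⟩, Fin.ext ?_⟩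
      show j + 1 + (x.val - (j + 1)) = x.val
      omega
    · rintro ⟨m, rfl⟩
      show j < j + 1 + m.val
      omega
  have hTcard : T.card = P - (j + 1) := by
    rw [hTmap, Finset.card_map, Finset.card_univ, Fintype.card_fin]
  have hmono : Monotone (fun i : Fin P => Δ k (b i) (h i) j) := fun i i' hii' =>
    delta_mono hk (hb1 i) (hbk i) (hb1 i') (hbk i') (hsorted i i' hii') j
  have hL : ∑ i ∈ T, Δ k (b (σ i)) (h (σ i)) j =
      ∑ x ∈ T.image σ, Δ k (b x) (h x) j :=
    (Finset.sum_image (f := fun x => Δ k (b x) (h x) j) (g := fun i : Fin P => σ i)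
      (fun a _ a' _ haa => σ.injective haa)).symm
  rw [hL]
  have hcc : (j + 1) + (P - (j + 1)) = P := by omega
  have hcard2 : (T.image σ).card = P - (j + 1) := by
    rw [Finset.card_image_of_injective _ σ.injective, hTcard]
  refine (sum_le_sum_top hcc (fun i => Δ k (b i) (h i) j) hmono (T.image σ) hcard2).trans ?_
  conv_rhs => rw [hTmap, Finset.sum_map]
  apply le_of_eq
  apply Finset.sum_congr rfl
  intro m _
  rfl
end
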